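/- arXiv:2505.22807 — 6 statements merged into one kernel-verified Lean document; each statement's English description precedes it below -/
import Mathlib

section
/- Assume d = 1, Θ = ℝ, and that for every z ∈ 𝒵 the convex loss ℓ_z : ℝ → ℝ is L-Lipschitz. Let Z_1,…,Z_n be i.i.d. P, let P_n denote their empirical distribution, and let θ̂ ∈ argmin_θ L_{P_n}(θ) be any empirical minimizer. Then for every t ≥ 0, P(ℰ_{L_P}(θ̂) > t) ≤ 2 exp(−n t² / (2L²)). -/
open MeasureTheory Set
open scoped NNReal

noncomputable section

/-- The right derivative of a convex `f : ℝ → ℝ`, `D₊f(θ) = inf_{t>0} (f(θ+t) - f(θ))/t`. -/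
def Dplus (f : ℝ → ℝ) (θ : ℝ) : ℝ :=
  sInf ((fun t => (f (θ + t) - f θ) / t) '' Set.Ioi 0)

/-- The left derivative of a convex `f : ℝ → ℝ`, `D₋f(θ) = sup_{t>0} (f(θ) - f(θ-t))/t`. -/
def Dminus (f : ℝ → ℝ) (θ : ℝ) : ℝ :=
  sSup ((fun t => (f θ - f (θ - t)) / t) '' Set.Ioi 0)

/-- The stationarity error
`ℰ_f(θ) = [max{-D₊f(θ), D₋f(θ)}]₊ - inf_θ inf_{g ∈ ∂f(θ)} |g|`. -/
def statErr (f : ℝ → ℝ) (θ : ℝ) : ℝ :=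
  max (max (-(Dplus f θ)) (Dminus f θ)) 0 -
    sInf {a : ℝ | ∃ θ₀ g : ℝ, a = |g| ∧ ∀ θ' : ℝ, f θ₀ + g * (θ' - θ₀) ≤ f θ'}

/-- If `m` is a global minimizer of a convex `g` and `m ≤ q < b`, then `g q ≤ g b`. -/
lemma convex_min_mono_right {g : ℝ → ℝ} (hg : ConvexOn ℝ Set.univ g) {m q b : ℝ}
    (hmin : ∀ w, g m ≤ g w) (h1 : m ≤ q) (h2 : q < b) : g q ≤ g b := by
  rcases eq_or_lt_of_le h1 with rfl | h1
  · exact hmin b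
  · set μ := (q - m) / (b - m) with hμ
    have hbm : 0 < b - m := by linarith
    have hμ0 : 0 < μ := div_pos (by linarith) hbm
    have hμ1 : μ < 1 := by rw [hμ, div_lt_one hbm]; linarith
    have hkey : μ * (b - m) = q - m := by rw [hμ]; exact div_mul_cancel₀ _ (ne_of_gt hbm)
    have hcombo : (1 - μ) * m + μ * b = q := by linear_combination hkey
    have := hg.2 (mem_univ m) (mem_univ b) (show (0:ℝ) ≤ 1 - μ by linarith) hμ0.le (show 1 - μ + μ = 1 by ring)
    simp only [smul_eq_mul] at this
    rw [hcombo] at this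
    have h4 : (1 - μ) * g m ≤ (1 - μ) * g q :=
      mul_le_mul_of_nonneg_left (hmin q) (by linarith)
    have h5 : μ * g q ≤ μ * g b := by linarith
    exact (mul_le_mul_iff_right₀ hμ0).mp h5

/-- If `m` is a global minimizer of a convex `g` and `a < q ≤ m`, then `g q ≤ g a`. -/
lemma convex_min_mono_left {g : ℝ → ℝ} (hg : ConvexOn ℝ Set.univ g) {m q a : ℝ}
    (hmin : ∀ w, g m ≤ g w) (h1 : q ≤ m) (h2 : a < q) : g q ≤ g a := by
  rcases eq_or_lt_of_le h1 with rfl | h1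
  · exact hmin a
  · set μ := (q - a) / (m - a) with hμ
    have hbm : 0 < m - a := by linarith
    have hμ0 : 0 < μ := div_pos (by linarith) hbm
    have hμ1 : μ < 1 := by rw [hμ, div_lt_one hbm]; linarith
    have hkey : μ * (m - a) = q - a := by rw [hμ]; exact div_mul_cancel₀ _ (ne_of_gt hbm)
    have hcombo : (1 - μ) * a + μ * m = q := by linear_combination hkey
    have := hg.2 (mem_univ a) (mem_univ m) (show (0:ℝ) ≤ 1 - μ by linarith) hμ0.le (show 1 - μ + μ = 1 by ring)
    simp only [smul_eq_mul] at this
    rw [hcombo] at this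
    have h4 : μ * g m ≤ μ * g q :=
      mul_le_mul_of_nonneg_left (hmin q) (by linarith)
    have h5 : (1 - μ) * g q ≤ (1 - μ) * g a := by linarith
    exact (mul_le_mul_iff_right₀ (by linarith : (0:ℝ) < 1 - μ)).mp h5


lemma convexOn_finset_sum {ι : Type*} (s : Finset ι) (g : ι → ℝ → ℝ)
    (hg : ∀ i, ConvexOn ℝ Set.univ (g i)) :
    ConvexOn ℝ Set.univ (fun θ => ∑ i ∈ s, g i θ) := by
  classical
  induction s using Finset.induction_on with
  | empty => simpa using convexOn_const (0:ℝ) convex_univ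
  | insert a s h ih =>
      simp only [Finset.sum_insert h]
      exact (hg a).add ih


lemma step3_aux {τ L c1 c2 : ℝ} (hc1pos : 0 < c1) (hc2pos : 0 < c2) (hL : 0 < L)
    (hc1sq : c1 ^ 2 = 1 + τ) (hc2sq : c2 ^ 2 = 1 - τ) :
    (c1 / c2 + (c1 / c2)⁻¹) / 2 + (-(τ * L)) * ((c1 / c2 - (c1 / c2)⁻¹) / (2 * L)) = c1 * c2 := by
  have h1 : c1 ≠ 0 := ne_of_gt hc1pos
  have h2 : c2 ≠ 0 := ne_of_gt hc2pos
  have hLne : L ≠ 0 := ne_of_gt hL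
  have hrinv : (c1 / c2)⁻¹ = c2 / c1 := inv_div _ _
  rw [hrinv, div_add_div _ _ h2 h1, div_sub_div _ _ h2 h1]
  have hn1 : c1 * c1 + c2 * c2 = 2 := by linear_combination hc1sq + hc2sq
  have hn2 : c1 * c1 - c2 * c2 = 2 * τ := by linear_combination hc1sq - hc2sq
  rw [hn1, hn2]
  have hprod : (c1 * c2) * (c1 * c2) = 1 - τ ^ 2 := by
    linear_combination (c2 ^ 2) * hc1sq + (1 + τ) * hc2sq
  field_simp
  linear_combination (-1) * hprod

lemma chernoff_key {Z : Type*} [MeasurableSpace Z] (P : Measure Z) [IsProbabilityMeasure P]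
    {L t : ℝ} (hL : 0 < L) (ht : 0 ≤ t) (htL : t < L) {Y : Z → ℝ}
    (hY : Integrable Y P) (hYb : ∀ z, |Y z| ≤ L) (hYm : ∫ z, Y z ∂P ≤ -t) (n : ℕ) :
    (Measure.pi fun _ : Fin n => P) {x | 0 ≤ ∑ i, Y (x i)}
      ≤ ENNReal.ofReal (Real.exp (-((n : ℝ) * t ^ 2) / (2 * L ^ 2))) := by
  -- measurable clamped version of Y
  have hYae : AEMeasurable Y P := hY.aemeasurable
  set g : Z → ℝ := fun z => max (-L) (min L (hYae.mk Y z)) with hgdef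
  have hgmeas : Measurable g := measurable_const.max (measurable_const.min hYae.measurable_mk)
  have hgY : Y =ᵐ[P] g := by
    filter_upwards [hYae.ae_eq_mk] with z hz
    have h1 := (abs_le.mp (hYb z)).1
    have h2 := (abs_le.mp (hYb z)).2
    simp only [hgdef, ← hz]
    rw [min_eq_right h2, max_eq_right h1]
  have hgb : ∀ z, |g z| ≤ L := by
    intro z
    rw [abs_le]
    constructor
    · exact le_max_left _ _
    · exact max_le (by linarith) (min_le_left _ _)
  have hgint : Integrable g P := hY.congr hgY
  have hgm : ∫ z, g z ∂P ≤ -t := by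
    rw [← integral_congr_ae hgY]; exact hYm
  set μpi := (Measure.pi fun _ : Fin n => P) with hμpi
  haveI : IsProbabilityMeasure μpi := by
    rw [hμpi]; infer_instance
  -- events agree a.e.
  have heval : ∀ i : Fin n, (fun x : Fin n → Z => Y (x i)) =ᵐ[μpi] fun x => g (x i) := by
    intro i
    exact hgY.comp_tendsto (Measure.tendsto_eval_ae_ae)
  have hae : ∀ᵐ x ∂μpi, ∀ i, Y (x i) = g (x i) := ae_all_iff.mpr heval
  have hsetseq : {x : Fin n → Z | 0 ≤ ∑ i, Y (x i)} =ᵐ[μpi] {x | 0 ≤ ∑ i, g (x i)} := by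
    filter_upwards [hae] with x hx
    have hs : ∑ i, Y (x i) = ∑ i, g (x i) := Finset.sum_congr rfl fun i _ => hx i
    show (0 ≤ ∑ i, Y (x i)) = (0 ≤ ∑ i, g (x i))
    rw [hs]
  rw [measure_congr hsetseq]
  -- set up the tilt parameter
  set τ := t / L with hτdef
  have hτ0 : 0 ≤ τ := div_nonneg ht hL.le
  have hτ1 : τ < 1 := (div_lt_one hL).mpr htL
  set c1 := Real.sqrt (1 + τ) with hc1
  set c2 := Real.sqrt (1 - τ) with hc2
  have hc1pos : 0 < c1 := Real.sqrt_pos.mpr (by linarith)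
  have hc2pos : 0 < c2 := Real.sqrt_pos.mpr (by linarith)
  have hc1sq : c1 ^ 2 = 1 + τ := Real.sq_sqrt (by linarith)
  have hc2sq : c2 ^ 2 = 1 - τ := Real.sq_sqrt (by linarith)
  have hc12 : c2 ≤ c1 := Real.sqrt_le_sqrt (by linarith)
  set r := c1 / c2 with hr
  have hrpos : 0 < r := div_pos hc1pos hc2pos
  have hr1 : 1 ≤ r := (one_le_div hc2pos).mpr hc12
  set lam := Real.log r / L with hlam
  have hlam0 : 0 ≤ lam := div_nonneg (Real.log_nonneg hr1) hL.le
  have helamL : Real.exp (lam * L) = r := by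
    rw [hlam, div_mul_cancel₀ _ (ne_of_gt hL)]
    exact Real.exp_log hrpos
  have helamL' : Real.exp (-(lam * L)) = r⁻¹ := by
    rw [Real.exp_neg, helamL]
  -- pointwise exponential bound
  have hptw : ∀ y : ℝ, |y| ≤ L → Real.exp (lam * y) ≤ (r + r⁻¹) / 2 + y * ((r - r⁻¹) / (2 * L)) := by
    intro y hy
    set s := (L + y) / (2 * L) with hs
    have hy1 := (abs_le.mp hy).1
    have hy2 := (abs_le.mp hy).2
    have hs0 : 0 ≤ s := div_nonneg (by linarith) (by linarith)
    have hs1 : s ≤ 1 := by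
      rw [hs, div_le_one (by linarith)]; linarith
    have hskey : s * (2 * L) = L + y := div_mul_cancel₀ _ (by positivity)
    have hcombo : (1 - s) * (-(lam * L)) + s * (lam * L) = lam * y := by
      have : (1 - s) * (-(lam * L)) + s * (lam * L) = lam * (s * (2 * L) - L) := by ring
      rw [this, hskey]; ring_nf
    have hcv := convexOn_exp.2 (mem_univ (-(lam * L))) (mem_univ (lam * L))
      (show (0:ℝ) ≤ 1 - s by linarith) hs0 (show 1 - s + s = 1 by ring)
    simp only [smul_eq_mul] at hcv
    rw [hcombo, helamL, helamL'] at hcv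
    refine hcv.trans (le_of_eq ?_)
    have hLne : L ≠ 0 := ne_of_gt hL
    rw [hs]
    field_simp
    ring
  -- integral bound for one sample
  set I := ∫ z, Real.exp (lam * g z) ∂P with hI
  have hexpint : Integrable (fun z => Real.exp (lam * g z)) P := by
    apply Integrable.mono' (integrable_const (Real.exp (lam * L)))
      ((hgmeas.const_mul lam).exp.aestronglyMeasurable)
    refine ae_of_all _ fun z => ?_
    rw [Real.norm_eq_abs, Real.abs_exp]
    exact Real.exp_le_exp.mpr (mul_le_mul_of_nonneg_left ((abs_le.mp (hgb z)).2) hlam0)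
  have hIbound : I ≤ Real.sqrt (1 - τ ^ 2) := by
    have step1 : I ≤ (r + r⁻¹) / 2 + (∫ z, g z ∂P) * ((r - r⁻¹) / (2 * L)) := by
      have hrhsint : Integrable (fun z => (r + r⁻¹) / 2 + g z * ((r - r⁻¹) / (2 * L))) P :=
        (integrable_const _).add (hgint.mul_const _)
      have hmono := integral_mono hexpint hrhsint (fun z => hptw (g z) (hgb z))
      rwa [integral_add (integrable_const _) (hgint.mul_const _), integral_const,
        probReal_univ, one_smul, integral_mul_const] at hmono
    have hcoef : 0 ≤ (r - r⁻¹) / (2 * L) := by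
      have hinv1 : r⁻¹ ≤ 1 := inv_le_one_of_one_le₀ hr1
      exact div_nonneg (by linarith) (by linarith)
    have step2 : I ≤ (r + r⁻¹) / 2 + (-t) * ((r - r⁻¹) / (2 * L)) :=
      step1.trans (by nlinarith [mul_le_mul_of_nonneg_right hgm hcoef])
    have hsqrteq : Real.sqrt (1 - τ ^ 2) = c1 * c2 := by
      rw [show (1 : ℝ) - τ ^ 2 = (1 + τ) * (1 - τ) by ring,
        Real.sqrt_mul (by linarith), ← hc1, ← hc2]
    have step3 : (r + r⁻¹) / 2 + (-t) * ((r - r⁻¹) / (2 * L)) = c1 * c2 := by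
      have htτ : t = τ * L := by
        rw [hτdef, div_mul_cancel₀ _ (ne_of_gt hL)]
      rw [hr, htτ]
      exact step3_aux hc1pos hc2pos hL hc1sq hc2sq
    rw [hsqrteq, ← step3]
    exact step2
  have hItarget : I ≤ Real.exp (-(τ ^ 2) / 2) := by
    refine hIbound.trans ?_
    have h1 : 1 - τ ^ 2 ≤ Real.exp (-(τ ^ 2)) := by
      have := Real.add_one_le_exp (-(τ ^ 2))
      linarith
    have h2 : Real.exp (-(τ ^ 2) / 2) ^ 2 = Real.exp (-(τ ^ 2)) := by
      rw [sq, ← Real.exp_add]; ring_nf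
    calc Real.sqrt (1 - τ ^ 2) ≤ Real.sqrt (Real.exp (-(τ ^ 2))) := Real.sqrt_le_sqrt h1
      _ = Real.exp (-(τ ^ 2) / 2) := by
          rw [← h2, Real.sqrt_sq (Real.exp_nonneg _)]
  have hInonneg : 0 ≤ I := integral_nonneg fun z => Real.exp_nonneg _
  -- Markov + independence
  letI : MeasureSpace Z := ⟨P⟩
  have hvol : μpi = (volume : Measure (Fin n → Z)) := by
    rw [hμpi, volume_pi]; rfl
  set F : (Fin n → Z) → ℝ := fun x => ∏ i, Real.exp (lam * g (x i)) with hF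
  have hFint : Integrable F (volume : Measure (Fin n → Z)) :=
    Integrable.fintype_prod (f := fun _ : Fin n => fun z => Real.exp (lam * g z))
      (fun _ => hexpint)
  have hFnonneg : ∀ x, 0 ≤ F x := fun x => Finset.prod_nonneg fun i _ => Real.exp_nonneg _
  have hsub : {x : Fin n → Z | 0 ≤ ∑ i, g (x i)} ⊆ {x | 1 ≤ F x} := by
    intro x hx
    simp only [Set.mem_setOf_eq] at hx ⊢
    have : F x = Real.exp (lam * ∑ i, g (x i)) := by
      rw [Finset.mul_sum, Real.exp_sum]
    rw [this]
    exact Real.one_le_exp (mul_nonneg hlam0 hx)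
  have hmarkov := mul_meas_ge_le_integral_of_nonneg (ae_of_all _ hFnonneg) hFint 1
  rw [one_mul] at hmarkov
  have hFI : (∫ x, F x) = I ^ n := by
    rw [hF, hI]
    show (∫ x, ∏ i, Real.exp (lam * g (x i)) ∂(Measure.pi fun _ : Fin n => P)) = _
    rw [MeasureTheory.integral_fintype_prod_eq_pow (𝕜 := ℝ) (ι := Fin n)
      (fun z => Real.exp (lam * g z)), Fintype.card_fin]
  rw [hvol]
  calc (volume : Measure (Fin n → Z)) {x | 0 ≤ ∑ i, g (x i)}
      ≤ volume {x | 1 ≤ F x} := measure_mono hsub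
    _ = ENNReal.ofReal ((volume : Measure (Fin n → Z)) {x | 1 ≤ F x}).toReal := by
        rw [ENNReal.ofReal_toReal]
        rw [← hvol]
        exact measure_ne_top _ _
    _ ≤ ENNReal.ofReal (∫ x, F x) := ENNReal.ofReal_le_ofReal hmarkov
    _ ≤ ENNReal.ofReal (Real.exp (-((n : ℝ) * t ^ 2) / (2 * L ^ 2))) := by
        apply ENNReal.ofReal_le_ofReal
        rw [hFI]
        calc I ^ n ≤ Real.exp (-(τ ^ 2) / 2) ^ n := pow_le_pow_left₀ hInonneg hItarget n
          _ = Real.exp ((n : ℝ) * (-(τ ^ 2) / 2)) := by rw [← Real.exp_nat_mul]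
          _ = Real.exp (-((n : ℝ) * t ^ 2) / (2 * L ^ 2)) := by
              congr 1
              have hLne : L ≠ 0 := ne_of_gt hL
              rw [hτdef]
              field_simp
              try ring
              try exact Or.inl trivial

set_option maxHeartbeats 2000000 in
/-- Proposition: stationarity of empirical minimizers of Lipschitz convex
losses: any empirical minimizer `θ̂` of `n` i.i.d. samples from `P` satisfies
`P(ℰ_{L_P}(θ̂) > t) ≤ 2 exp(-n t² / (2L²))`. -/
theorem statement5 {Z : Type*} [MeasurableSpace Z] (ℓ : Z → ℝ → ℝ) (L : ℝ≥0)
    (hconv : ∀ z, ConvexOn ℝ Set.univ (ℓ z)) (hlip : ∀ z, LipschitzWith L (ℓ z))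
    (P : Measure Z) (hP : IsProbabilityMeasure P)
    (hint : ∀ θ : ℝ, Integrable (fun z => ℓ z θ) P)
    (n : ℕ) (θhat : (Fin n → Z) → ℝ)
    (hmin : ∀ x : Fin n → Z, ∀ θ : ℝ, (∑ i, ℓ (x i) (θhat x)) ≤ ∑ i, ℓ (x i) θ)
    (t : ℝ) (ht : 0 ≤ t) :
    (Measure.pi fun _ : Fin n => P) {x | t < statErr (fun θ => ∫ z, ℓ z θ ∂P) (θhat x)}
      ≤ ENNReal.ofReal (2 * Real.exp (-((n : ℝ) * t ^ 2) / (2 * (L : ℝ) ^ 2))) := by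
  set f : ℝ → ℝ := fun θ => ∫ z, ℓ z θ ∂P with hf
  set μpi := (Measure.pi fun _ : Fin n => P) with hμpi
  have hLnn : (0:ℝ) ≤ L := L.2
  -- f is L-Lipschitz (one-sided version)
  have hlipf : ∀ a b : ℝ, f a - f b ≤ L * |a - b| := by
    intro a b
    have h1 : f a - f b = ∫ z, (ℓ z a - ℓ z b) ∂P := (integral_sub (hint a) (hint b)).symm
    rw [h1]
    have h2 : ∀ z, ℓ z a - ℓ z b ≤ (L:ℝ) * |a - b| := by
      intro z
      have := (hlip z).dist_le_mul a b
      rw [Real.dist_eq, Real.dist_eq] at this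
      calc ℓ z a - ℓ z b ≤ |ℓ z a - ℓ z b| := le_abs_self _
        _ ≤ (L:ℝ) * |a - b| := this
    calc ∫ z, (ℓ z a - ℓ z b) ∂P ≤ ∫ _z, (L:ℝ) * |a - b| ∂P :=
          integral_mono ((hint a).sub (hint b)) (integrable_const _) h2
      _ = (L:ℝ) * |a - b| := by rw [integral_const, probReal_univ, one_smul]
  -- elementary bounds on one-sided derivatives of f
  have hSne : ∀ θ : ℝ, ((fun h => (f (θ + h) - f θ) / h) '' Set.Ioi (0:ℝ)).Nonempty :=
    fun θ => ⟨_, ⟨1, by norm_num, rfl⟩⟩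
  have hS'ne : ∀ θ : ℝ, ((fun h => (f θ - f (θ - h)) / h) '' Set.Ioi (0:ℝ)).Nonempty :=
    fun θ => ⟨_, ⟨1, by norm_num, rfl⟩⟩
  have hDplus_ge : ∀ θ : ℝ, -(L:ℝ) ≤ Dplus f θ := by
    intro θ
    refine le_csInf (hSne θ) ?_
    rintro y ⟨h, hh, rfl⟩
    rw [Set.mem_Ioi] at hh
    rw [le_div_iff₀ hh]
    have := hlipf θ (θ + h)
    have habs : |θ - (θ + h)| = h := by
      rw [abs_sub_comm]; simp [abs_of_pos hh]
    rw [habs] at this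
    linarith
  have hDminus_le : ∀ θ : ℝ, Dminus f θ ≤ (L:ℝ) := by
    intro θ
    refine csSup_le (hS'ne θ) ?_
    rintro y ⟨h, hh, rfl⟩
    rw [Set.mem_Ioi] at hh
    rw [div_le_iff₀ hh]
    have := hlipf θ (θ - h)
    have habs : |θ - (θ - h)| = h := by simp [abs_of_pos hh]
    rw [habs] at this
    linarith
  -- the subtracted infimum in statErr is nonnegative
  have hInonneg : ∀ θ : ℝ, statErr f θ ≤ max (max (-(Dplus f θ)) (Dminus f θ)) 0 := by
    intro θ
    have h0 : 0 ≤ sInf {a : ℝ | ∃ θ₀ g : ℝ, a = |g| ∧ ∀ θ' : ℝ, f θ₀ + g * (θ' - θ₀) ≤ f θ'} := by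
      apply Real.sInf_nonneg
      rintro a ⟨θ₀, g, rfl, -⟩
      exact abs_nonneg g
    unfold statErr
    linarith
  -- event decomposition
  have hsub : {x : Fin n → Z | t < statErr f (θhat x)} ⊆
      {x | Dplus f (θhat x) < -t} ∪ {x | t < Dminus f (θhat x)} := by
    intro x hx
    simp only [Set.mem_setOf_eq] at hx
    have h1 : t < max (max (-(Dplus f (θhat x))) (Dminus f (θhat x))) 0 :=
      lt_of_lt_of_le hx (hInonneg _)
    rcases lt_max_iff.mp h1 with h2 | h2
    · rcases lt_max_iff.mp h2 with h3 | h3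
      · exact Or.inl (by simp only [Set.mem_setOf_eq]; linarith)
      · exact Or.inr h3
    · linarith
  by_cases hcase : t < (L:ℝ)
  · have hL0 : (0:ℝ) < L := lt_of_le_of_lt ht hcase
    set E1 := ENNReal.ofReal (Real.exp (-((n : ℝ) * t ^ 2) / (2 * (L:ℝ) ^ 2))) with hE1
    -- ============ bound for the right-derivative event ============
    have hboundA : μpi {x | Dplus f (θhat x) < -t} ≤ E1 := by
      set C : ℚ × ℚ → Set (Fin n → Z) := fun p =>
        {x | 0 < ((p.2:ℝ)) ∧ f ((p.1:ℝ) + (p.2:ℝ)) - f (p.1:ℝ) ≤ -t * (p.2:ℝ) ∧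
          θhat x ≤ (p.1:ℝ)} with hC
      have hdir : Directed (· ⊆ ·) C := by
        intro p p'
        by_cases h1 : 0 < ((p.2:ℝ)) ∧ f ((p.1:ℝ) + (p.2:ℝ)) - f (p.1:ℝ) ≤ -t * (p.2:ℝ)
        · by_cases h2 : 0 < ((p'.2:ℝ)) ∧ f ((p'.1:ℝ) + (p'.2:ℝ)) - f (p'.1:ℝ) ≤ -t * (p'.2:ℝ)
          · rcases le_total p.1 p'.1 with h3 | h3
            · refine ⟨p', fun x hx => ?_, fun x hx => hx⟩
              exact ⟨h2.1, h2.2, hx.2.2.trans (by exact_mod_cast h3)⟩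
            · refine ⟨p, fun x hx => hx, fun x hx => ?_⟩
              exact ⟨h1.1, h1.2, hx.2.2.trans (by exact_mod_cast h3)⟩
          · exact ⟨p, fun x hx => hx, fun x hx => absurd ⟨hx.1, hx.2.1⟩ h2⟩
        · exact ⟨p', fun x hx => absurd ⟨hx.1, hx.2.1⟩ h1, fun x hx => hx⟩
      have hcover : {x : Fin n → Z | Dplus f (θhat x) < -t} ⊆ ⋃ p, C p := by
        intro x hx
        simp only [Set.mem_setOf_eq] at hx
        set θ := θhat x with hθ
        have hex : ∃ h₀ > 0, (f (θ + h₀) - f θ) / h₀ < -t := by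
          by_contra hcon
          push_neg at hcon
          have : -t ≤ Dplus f θ := by
            refine le_csInf (hSne θ) ?_
            rintro y ⟨h, hh, rfl⟩
            exact hcon h (Set.mem_Ioi.mp hh)
          linarith
        obtain ⟨h₀, hh₀, hslope⟩ := hex
        set s₀ := (f (θ + h₀) - f θ) / h₀ with hs₀def
        have hs₀ : f (θ + h₀) - f θ = s₀ * h₀ := (div_mul_cancel₀ _ (ne_of_gt hh₀)).symm
        set ε := -t - s₀ with hεdef
        have hεpos : 0 < ε := by rw [hεdef]; linarith
        set δ := min (ε * h₀ / (2*(L:ℝ) + 2*t + 1)) (h₀/2) with hδdef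
        have hden : (0:ℝ) < 2*(L:ℝ) + 2*t + 1 := by linarith
        have hδpos : 0 < δ := lt_min (by positivity) (by positivity)
        have hδ1 : (2*(L:ℝ) + 2*t + 1) * δ ≤ ε * h₀ := by
          have h4 : δ ≤ ε * h₀ / (2*(L:ℝ) + 2*t + 1) := min_le_left _ _
          calc (2*(L:ℝ) + 2*t + 1) * δ ≤ (2*(L:ℝ) + 2*t + 1) * (ε * h₀ / (2*(L:ℝ) + 2*t + 1)) :=
                mul_le_mul_of_nonneg_left h4 hden.le
            _ = ε * h₀ := by field_simp
        have hδ2 : 2*δ ≤ h₀ := by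
          have := min_le_right (ε * h₀ / (2*(L:ℝ) + 2*t + 1)) (h₀/2)
          rw [← hδdef] at this
          linarith
        obtain ⟨q, hq1, hq2⟩ := exists_rat_btwn (show θ < θ + δ by linarith)
        obtain ⟨b, hb1, hb2⟩ := exists_rat_btwn (show θ + h₀ < θ + h₀ + δ by linarith)
        refine Set.mem_iUnion.mpr ⟨(q, b - q), ?_⟩
        have hcast : ((b - q : ℚ) : ℝ) = (b:ℝ) - (q:ℝ) := by push_cast; ring
        have hqb : (q:ℝ) < b := by linarith
        refine ⟨?_, ?_, hq1.le⟩
        · simp only [hcast]; linarith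
        · simp only [hcast]
          have harg : (q:ℝ) + ((b:ℝ) - (q:ℝ)) = (b:ℝ) := by ring
          rw [harg]
          -- Lipschitz perturbations
          have hp1 : f (b:ℝ) - f (θ + h₀) ≤ (L:ℝ) * ((b:ℝ) - (θ + h₀)) := by
            have := hlipf (b:ℝ) (θ + h₀)
            rwa [abs_of_pos (by linarith)] at this
          have hp2 : f θ - f (q:ℝ) ≤ (L:ℝ) * ((q:ℝ) - θ) := by
            have := hlipf θ (q:ℝ)
            rwa [abs_sub_comm, abs_of_pos (by linarith)] at this
          have hm1 : (L:ℝ) * ((b:ℝ) - (θ + h₀)) ≤ (L:ℝ) * δ :=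
            mul_le_mul_of_nonneg_left (by linarith) hLnn
          have hm2 : (L:ℝ) * ((q:ℝ) - θ) ≤ (L:ℝ) * δ :=
            mul_le_mul_of_nonneg_left (by linarith) hLnn
          have hbq : (b:ℝ) - (q:ℝ) ≤ h₀ + δ := by linarith
          have ht1 : t * ((b:ℝ) - (q:ℝ)) ≤ t * h₀ + t * δ := by nlinarith
          have hs₀h : s₀ * h₀ = -(t * h₀) - ε * h₀ := by
            have : s₀ = -t - ε := by rw [hεdef]; ring
            rw [this]; ring
          have hδprod : 2*(L:ℝ)*δ + 2*t*δ + δ ≤ ε * h₀ := by nlinarith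
          have htδ : 0 ≤ t * δ := mul_nonneg ht hδpos.le
          nlinarith
      calc μpi {x | Dplus f (θhat x) < -t} ≤ μpi (⋃ p, C p) := measure_mono hcover
        _ = ⨆ p, μpi (C p) := Directed.measure_iUnion hdir
        _ ≤ E1 := by
            refine iSup_le fun p => ?_
            by_cases hp : 0 < ((p.2:ℝ)) ∧ f ((p.1:ℝ) + (p.2:ℝ)) - f (p.1:ℝ) ≤ -t * (p.2:ℝ)
            · set Y : Z → ℝ := fun z => (ℓ z ((p.1:ℝ) + (p.2:ℝ)) - ℓ z (p.1:ℝ)) / (p.2:ℝ)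
                with hY
              have hYint : Integrable Y P := (((hint _).sub (hint _)).div_const _)
              have hYb : ∀ z, |Y z| ≤ (L:ℝ) := by
                intro z
                rw [hY]
                have hd := (hlip z).dist_le_mul ((p.1:ℝ) + (p.2:ℝ)) (p.1:ℝ)
                rw [Real.dist_eq, Real.dist_eq] at hd
                have harg : ((p.1:ℝ) + (p.2:ℝ)) - (p.1:ℝ) = (p.2:ℝ) := by ring
                rw [harg, abs_of_pos hp.1] at hd
                rw [abs_div, abs_of_pos hp.1, div_le_iff₀ hp.1]
                exact hd
              have hYm : ∫ z, Y z ∂P ≤ -t := by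
                rw [hY]
                rw [integral_div, integral_sub (hint _) (hint _)]
                rw [div_le_iff₀ hp.1]
                exact hp.2
              have hsubY : C p ⊆ {x | 0 ≤ ∑ i, Y (x i)} := by
                intro x hx
                obtain ⟨hph, hpf, hxq⟩ := hx
                have hfn : ConvexOn ℝ Set.univ (fun θ => ∑ i, ℓ (x i) θ) :=
                  convexOn_finset_sum _ _ (fun i => hconv (x i))
                have hmono := convex_min_mono_right hfn (hmin x) hxq
                  (show (p.1:ℝ) < (p.1:ℝ) + (p.2:ℝ) by linarith)
                simp only [Set.mem_setOf_eq, hY]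
                rw [← Finset.sum_div]
                apply div_nonneg _ hph.le
                rw [Finset.sum_sub_distrib]
                linarith
              calc μpi (C p) ≤ μpi {x | 0 ≤ ∑ i, Y (x i)} := measure_mono hsubY
                _ ≤ E1 := chernoff_key P hL0 ht hcase hYint hYb hYm n
            · have hCempty : C p = ∅ :=
                Set.eq_empty_iff_forall_notMem.mpr fun x hx => hp ⟨hx.1, hx.2.1⟩
              rw [hCempty, measure_empty]
              exact zero_le
    -- ============ bound for the left-derivative event ============
    have hboundB : μpi {x | t < Dminus f (θhat x)} ≤ E1 := by
      set C : ℚ × ℚ → Set (Fin n → Z) := fun p =>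
        {x | 0 < ((p.2:ℝ)) ∧ f ((p.1:ℝ) - (p.2:ℝ)) - f (p.1:ℝ) ≤ -t * (p.2:ℝ) ∧
          (p.1:ℝ) ≤ θhat x} with hC
      have hdir : Directed (· ⊆ ·) C := by
        intro p p'
        by_cases h1 : 0 < ((p.2:ℝ)) ∧ f ((p.1:ℝ) - (p.2:ℝ)) - f (p.1:ℝ) ≤ -t * (p.2:ℝ)
        · by_cases h2 : 0 < ((p'.2:ℝ)) ∧ f ((p'.1:ℝ) - (p'.2:ℝ)) - f (p'.1:ℝ) ≤ -t * (p'.2:ℝ)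
          · rcases le_total p.1 p'.1 with h3 | h3
            · refine ⟨p, fun x hx => hx, fun x hx => ?_⟩
              exact ⟨h1.1, h1.2, le_trans (by exact_mod_cast h3) hx.2.2⟩
            · refine ⟨p', fun x hx => ?_, fun x hx => hx⟩
              exact ⟨h2.1, h2.2, le_trans (by exact_mod_cast h3) hx.2.2⟩
          · exact ⟨p, fun x hx => hx, fun x hx => absurd ⟨hx.1, hx.2.1⟩ h2⟩
        · exact ⟨p', fun x hx => absurd ⟨hx.1, hx.2.1⟩ h1, fun x hx => hx⟩
      have hcover : {x : Fin n → Z | t < Dminus f (θhat x)} ⊆ ⋃ p, C p := by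
        intro x hx
        simp only [Set.mem_setOf_eq] at hx
        set θ := θhat x with hθ
        have hex : ∃ h₀ > 0, t < (f θ - f (θ - h₀)) / h₀ := by
          by_contra hcon
          push_neg at hcon
          have : Dminus f θ ≤ t := by
            refine csSup_le (hS'ne θ) ?_
            rintro y ⟨h, hh, rfl⟩
            exact hcon h (Set.mem_Ioi.mp hh)
          linarith
        obtain ⟨h₀, hh₀, hslope⟩ := hex
        set s₀ := (f θ - f (θ - h₀)) / h₀ with hs₀def
        have hs₀ : f θ - f (θ - h₀) = s₀ * h₀ := (div_mul_cancel₀ _ (ne_of_gt hh₀)).symm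
        set ε := s₀ - t with hεdef
        have hεpos : 0 < ε := by rw [hεdef]; linarith
        set δ := min (ε * h₀ / (2*(L:ℝ) + 2*t + 1)) (h₀/2) with hδdef
        have hden : (0:ℝ) < 2*(L:ℝ) + 2*t + 1 := by linarith
        have hδpos : 0 < δ := lt_min (by positivity) (by positivity)
        have hδ1 : (2*(L:ℝ) + 2*t + 1) * δ ≤ ε * h₀ := by
          have h4 : δ ≤ ε * h₀ / (2*(L:ℝ) + 2*t + 1) := min_le_left _ _
          calc (2*(L:ℝ) + 2*t + 1) * δ ≤ (2*(L:ℝ) + 2*t + 1) * (ε * h₀ / (2*(L:ℝ) + 2*t + 1)) :=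
                mul_le_mul_of_nonneg_left h4 hden.le
            _ = ε * h₀ := by field_simp
        have hδ2 : 2*δ ≤ h₀ := by
          have := min_le_right (ε * h₀ / (2*(L:ℝ) + 2*t + 1)) (h₀/2)
          rw [← hδdef] at this
          linarith
        obtain ⟨q, hq1, hq2⟩ := exists_rat_btwn (show θ - δ < θ by linarith)
        obtain ⟨a, ha1, ha2⟩ := exists_rat_btwn (show θ - h₀ - δ < θ - h₀ by linarith)
        refine Set.mem_iUnion.mpr ⟨(q, q - a), ?_⟩
        have hcast : ((q - a : ℚ) : ℝ) = (q:ℝ) - (a:ℝ) := by push_cast; ring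
        have hqa : (a:ℝ) < q := by linarith
        refine ⟨?_, ?_, hq2.le⟩
        · simp only [hcast]; linarith
        · simp only [hcast]
          have harg : (q:ℝ) - ((q:ℝ) - (a:ℝ)) = (a:ℝ) := by ring
          rw [harg]
          have hp1 : f (a:ℝ) - f (θ - h₀) ≤ (L:ℝ) * ((θ - h₀) - (a:ℝ)) := by
            have := hlipf (a:ℝ) (θ - h₀)
            rwa [abs_sub_comm, abs_of_pos (by linarith)] at this
          have hp2 : f θ - f (q:ℝ) ≤ (L:ℝ) * (θ - (q:ℝ)) := by
            have := hlipf θ (q:ℝ)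
            rwa [abs_of_pos (by linarith)] at this
          have hm1 : (L:ℝ) * ((θ - h₀) - (a:ℝ)) ≤ (L:ℝ) * δ :=
            mul_le_mul_of_nonneg_left (by linarith) hLnn
          have hm2 : (L:ℝ) * (θ - (q:ℝ)) ≤ (L:ℝ) * δ :=
            mul_le_mul_of_nonneg_left (by linarith) hLnn
          have hqa2 : (q:ℝ) - (a:ℝ) ≤ h₀ + δ := by linarith
          have ht1 : t * ((q:ℝ) - (a:ℝ)) ≤ t * h₀ + t * δ := by nlinarith
          have hs₀h : s₀ * h₀ = t * h₀ + ε * h₀ := by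
            have : s₀ = t + ε := by rw [hεdef]; ring
            rw [this]; ring
          have hδprod : 2*(L:ℝ)*δ + 2*t*δ + δ ≤ ε * h₀ := by nlinarith
          have htδ : 0 ≤ t * δ := mul_nonneg ht hδpos.le
          nlinarith
      calc μpi {x | t < Dminus f (θhat x)} ≤ μpi (⋃ p, C p) := measure_mono hcover
        _ = ⨆ p, μpi (C p) := Directed.measure_iUnion hdir
        _ ≤ E1 := by
            refine iSup_le fun p => ?_
            by_cases hp : 0 < ((p.2:ℝ)) ∧ f ((p.1:ℝ) - (p.2:ℝ)) - f (p.1:ℝ) ≤ -t * (p.2:ℝ)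
            · set Y : Z → ℝ := fun z => (ℓ z ((p.1:ℝ) - (p.2:ℝ)) - ℓ z (p.1:ℝ)) / (p.2:ℝ)
                with hY
              have hYint : Integrable Y P := (((hint _).sub (hint _)).div_const _)
              have hYb : ∀ z, |Y z| ≤ (L:ℝ) := by
                intro z
                rw [hY]
                have hd := (hlip z).dist_le_mul ((p.1:ℝ) - (p.2:ℝ)) (p.1:ℝ)
                rw [Real.dist_eq, Real.dist_eq] at hd
                have harg : ((p.1:ℝ) - (p.2:ℝ)) - (p.1:ℝ) = -(p.2:ℝ) := by ring
                rw [harg, abs_neg, abs_of_pos hp.1] at hd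
                rw [abs_div, abs_of_pos hp.1, div_le_iff₀ hp.1]
                exact hd
              have hYm : ∫ z, Y z ∂P ≤ -t := by
                rw [hY]
                rw [integral_div, integral_sub (hint _) (hint _)]
                rw [div_le_iff₀ hp.1]
                exact hp.2
              have hsubY : C p ⊆ {x | 0 ≤ ∑ i, Y (x i)} := by
                intro x hx
                obtain ⟨hph, hpf, hxq⟩ := hx
                have hfn : ConvexOn ℝ Set.univ (fun θ => ∑ i, ℓ (x i) θ) :=
                  convexOn_finset_sum _ _ (fun i => hconv (x i))
                have hmono := convex_min_mono_left hfn (hmin x) hxq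
                  (show (p.1:ℝ) - (p.2:ℝ) < (p.1:ℝ) by linarith)
                simp only [Set.mem_setOf_eq, hY]
                rw [← Finset.sum_div]
                apply div_nonneg _ hph.le
                rw [Finset.sum_sub_distrib]
                linarith
              calc μpi (C p) ≤ μpi {x | 0 ≤ ∑ i, Y (x i)} := measure_mono hsubY
                _ ≤ E1 := chernoff_key P hL0 ht hcase hYint hYb hYm n
            · have hCempty : C p = ∅ :=
                Set.eq_empty_iff_forall_notMem.mpr fun x hx => hp ⟨hx.1, hx.2.1⟩
              rw [hCempty, measure_empty]
              exact zero_le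
    -- ============ combine ============
    calc μpi {x | t < statErr f (θhat x)}
        ≤ μpi ({x | Dplus f (θhat x) < -t} ∪ {x | t < Dminus f (θhat x)}) := measure_mono hsub
      _ ≤ μpi {x | Dplus f (θhat x) < -t} + μpi {x | t < Dminus f (θhat x)} := measure_union_le _ _
      _ ≤ E1 + E1 := add_le_add hboundA hboundB
      _ = ENNReal.ofReal (2 * Real.exp (-((n : ℝ) * t ^ 2) / (2 * (L : ℝ) ^ 2))) := by
          rw [hE1, ← ENNReal.ofReal_add (Real.exp_nonneg _) (Real.exp_nonneg _)]
          congr 1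
          ring
  · -- t ≥ L : the event is empty
    have hempty : {x : Fin n → Z | t < statErr f (θhat x)} ⊆ (∅ : Set (Fin n → Z)) := by
      intro x hx
      have h1 := hsub hx
      rcases h1 with h2 | h2
      · simp only [Set.mem_setOf_eq] at h2
        have := hDplus_ge (θhat x)
        push_neg at hcase
        linarith
      · simp only [Set.mem_setOf_eq] at h2
        have := hDminus_le (θhat x)
        push_neg at hcase
        linarith
    calc μpi {x | t < statErr f (θhat x)} ≤ μpi ∅ := measure_mono hempty
      _ = 0 := measure_empty
      _ ≤ _ := zero_le

end
end

section
/- Let Q be a finitely supported probability distribution on 𝒵 and assume that θ*(Q) := argmin_{θ∈Θ} L_Q(θ) is compact (and nonempty). Then θ*(Q) is directable. -/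
open MeasureTheory Set Metric Pointwise ENNReal
open scoped Classical

noncomputable section

/-- The nonnegative part of an extended real, as an element of `ℝ≥0∞`. -/
def erealToENN (x : EReal) : ℝ≥0∞ := if x = ⊤ then ⊤ else ENNReal.ofReal x.toReal

/-- Integral of an extended-real-valued function: positive part minus negative part. -/
def eIntegral {α : Type*} [MeasurableSpace α] (P : Measure α) (g : α → EReal) : EReal :=
  ((∫⁻ z, erealToENN (g z) ∂P : ℝ≥0∞) : EReal) - ((∫⁻ z, erealToENN (-(g z)) ∂P : ℝ≥0∞) : EReal)

variable {Z : Type*} [MeasurableSpace Z] {E : Type*} [NormedAddCommGroup E] [InnerProductSpace ℝ E]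

/-- Convexity of an `EReal`-valued function. -/
def ConvexFnE (f : E → EReal) : Prop :=
  ∀ x y : E, ∀ a b : ℝ, 0 ≤ a → 0 ≤ b → a + b = 1 →
    f (a • x + b • y) ≤ (a : EReal) * f x + (b : EReal) * f y

/-- The convex subdifferential of an `EReal`-valued function. -/
def subdiffE (f : E → EReal) (θ : E) : Set E :=
  {g | ∀ θ' : E, f θ + ((inner ℝ g (θ' - θ) : ℝ) : EReal) ≤ f θ'}

/-- The convex indicator of a set. -/
def indE (Θ : Set E) : E → EReal := fun θ => if θ ∈ Θ then (0 : EReal) else ⊤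

/-- The standing hypotheses on the losses: no `-∞` values, closed (lsc), convex,
finite on the interior of `Θ`, and measurable in `z`. -/
def ProperClosedConvexLoss (ℓ : Z → E → EReal) (Θ : Set E) : Prop :=
  (∀ z θ, ℓ z θ ≠ ⊥) ∧ (∀ z, LowerSemicontinuous (ℓ z)) ∧ (∀ z, ConvexFnE (ℓ z)) ∧
    (∀ z, ∀ θ ∈ interior Θ, ℓ z θ ≠ ⊤) ∧ (∀ θ : E, Measurable fun z => ℓ z θ)

/-- The population loss `L_P(θ) = E_P[ℓ_Z(θ)]`. -/
def popLoss (ℓ : Z → E → EReal) (P : Measure Z) (θ : E) : EReal := eIntegral P fun z => ℓ z θ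

/-- `L_P^*(S) = inf_{θ ∈ S} L_P(θ)`. -/
def popLossInf (ℓ : Z → E → EReal) (P : Measure Z) (S : Set E) : EReal := ⨅ θ ∈ S, popLoss ℓ P θ

/-- Finitely supported probability distributions on `Z`. -/
def Pdisc (Z : Type*) [MeasurableSpace Z] : Set (Measure Z) :=
  {P | IsProbabilityMeasure P ∧ ∃ s : Finset Z, P ((s : Set Z))ᶜ = 0}

/-- A set `C ⊆ Θ` is directable. -/
def Directable (ℓ : Z → E → EReal) (Θ : Set E) (C : Set E) : Prop :=
  ∀ ε : ℝ, 0 < ε → ∃ Cε : Set E,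
    C ⊆ Cε ∧ Cε ⊆ Θ ∧ IsCompact Cε ∧ Convex ℝ Cε ∧ (∀ θ ∈ Cε, Metric.infDist θ C ≤ ε) ∧
      ∃ (k : ℕ) (zs : Fin k → Z) (δ : ℝ), 0 < δ ∧
        Metric.closedBall (0 : E) δ ⊆
          ⋃ Q ∈ {Q : Measure Z | IsProbabilityMeasure Q ∧ Q (Set.range zs)ᶜ = 0},
            ⋃ θ ∈ Cε, subdiffE (fun θ' => popLoss ℓ Q θ' + indE Θ θ') θ

/-- The halfspace `H_{v,t} = {θ : ⟨v,θ⟩ ≤ t ‖v‖}`. -/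
def halfspaceH (v : E) (t : ℝ) : Set E := {θ | (inner ℝ v θ : ℝ) ≤ t * ‖v‖}

/-- A pair `(v, t)` is unconstraining if `H_{v,t}` meets every directable subset of `Θ`. -/
def UnconstrainingPair (ℓ : Z → E → EReal) (Θ : Set E) (v : E) (t : ℝ) : Prop :=
  ∀ C : Set E, C ⊆ Θ → Directable ℓ Θ C → (halfspaceH v t ∩ C).Nonempty

/-- The achievable set: intersection of all unconstraining halfspaces. -/
def achievableSet (ℓ : Z → E → EReal) (Θ : Set E) : Set E :=
  ⋂ p ∈ {p : E × ℝ | UnconstrainingPair ℓ Θ p.1 p.2}, halfspaceH p.1 p.2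

/-- `f` is `K`-Lipschitz on `s` (for `EReal`-valued `f`). -/
def LipschitzOnE (f : E → EReal) (s : Set E) (K : ℝ) : Prop :=
  ∀ x ∈ s, ∀ y ∈ s, f x ≤ f y + ((K * ‖x - y‖ : ℝ) : EReal)

/-- Condition C.1: uniform Lipschitz continuity on compact subsets of the interior. -/
def CondC1 (ℓ : Z → E → EReal) (Θ : Set E) : Prop :=
  ∀ Θ₀ : Set E, Θ₀ ⊆ interior Θ → IsCompact Θ₀ → ∃ K : ℝ, ∀ z : Z, LipschitzOnE (ℓ z) Θ₀ K

/-- Condition C.2. -/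
def CondC2 (ℓ : Z → E → EReal) (Θ : Set E) : Prop :=
  CondC1 ℓ Θ ∧ ∀ ε : ℝ, 0 < ε → ∃ Θ₀ : Set E, Θ₀ ⊆ Θ ∧ IsCompact Θ₀ ∧
    ∀ Q ∈ Pdisc Z, (⨅ θ ∈ Θ₀, (popLoss ℓ Q θ - popLossInf ℓ Q Θ)) ≤ (ε : EReal)

variable [MeasurableSpace E]

/-- Measurable estimators taking values in `Θ`. -/
def Estimators (Θ : Set E) (Z : Type*) [MeasurableSpace Z] (n : ℕ) : Set ((Fin n → Z) → E) :=
  {f | Measurable f ∧ ∀ x, f x ∈ Θ}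

/-- The expected excess risk of the estimator `f` at sample size `n` under `P`. -/
def riskOf (ℓ : Z → E → EReal) (Θ : Set E) {n : ℕ} (f : (Fin n → Z) → E) (P : Measure Z) :
    EReal :=
  eIntegral (Measure.pi fun _ : Fin n => P) fun x => popLoss ℓ P (f x) - popLossInf ℓ P Θ

/-- The discrete minimax risk `𝔐̲_n(ℓ, Z, Θ)`. -/
def minimaxLow (ℓ : Z → E → EReal) (Θ : Set E) (n : ℕ) : EReal :=
  ⨅ f ∈ Estimators Θ Z n, ⨆ P ∈ Pdisc Z, riskOf ℓ Θ f P

/-- The well-defined Borel probability measures `𝒫_ℓ(Z)`. -/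
def Pell (ℓ : Z → E → EReal) (Θ : Set E) : Set (Measure Z) :=
  {P | IsProbabilityMeasure P ∧
    (∀ θ ∈ interior Θ,
      (∫⁻ z, erealToENN (ℓ z θ) ∂P) ≠ ⊤ ∧ (∫⁻ z, erealToENN (-(ℓ z θ)) ∂P) ≠ ⊤) ∧
    (∀ θ ∈ Θ, (∫⁻ z, erealToENN (-(ℓ z θ)) ∂P) ≠ ⊤)}

/-- The minimax risk `𝔐_n(ℓ, Z, Θ)`. -/
def minimaxRisk (ℓ : Z → E → EReal) (Θ : Set E) (n : ℕ) : EReal :=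
  ⨅ f ∈ Estimators Θ Z n, ⨆ P ∈ Pell ℓ Θ, riskOf ℓ Θ f P


namespace S6
open Filter

lemma e_coe (x : ℝ) : erealToENN (x : EReal) = ENNReal.ofReal x := by
  rw [erealToENN, if_neg (by simp)]; simp

@[simp] lemma e_top : erealToENN ⊤ = ⊤ := if_pos rfl

@[simp] lemma e_bot : erealToENN ⊥ = 0 := by
  rw [erealToENN, if_neg (by simp)]; simp

lemma e_ne_top {x : EReal} (h : x ≠ ⊤) : erealToENN x ≠ ⊤ := by
  rw [erealToENN, if_neg h]; exact ENNReal.ofReal_ne_top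

lemma e_mono : Monotone erealToENN := by
  intro x y hxy
  rcases eq_or_ne y ⊤ with rfl | hy
  · simp
  rcases eq_or_ne x ⊥ with rfl | hx
  · simp
  rcases eq_or_ne x ⊤ with rfl | hx'
  · exact absurd (top_le_iff.1 hxy) hy
  rcases eq_or_ne y ⊥ with rfl | hy'
  · rw [le_bot_iff.1 hxy]
  rw [erealToENN, if_neg hx', erealToENN, if_neg hy]
  exact ENNReal.ofReal_le_ofReal (EReal.toReal_le_toReal hxy hx hy)

lemma e_meas : Measurable erealToENN := by
  have : Measurable fun x : EReal => ENNReal.ofReal x.toReal :=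
    ENNReal.measurable_ofReal.comp measurable_ereal_toReal
  exact Measurable.ite (measurableSet_singleton ⊤) measurable_const this

lemma le_liminf_ennreal {u : ℕ → ℝ≥0∞} {a : ℝ≥0∞}
    (h : ∀ᶠ k in atTop, a ≤ u k) : a ≤ liminf u atTop :=
  Filter.le_liminf_of_le (by isBoundedDefault) h

lemma limsup_le_ennreal {u : ℕ → ℝ≥0∞} {a : ℝ≥0∞}
    (h : ∀ᶠ k in atTop, u k ≤ a) : limsup u atTop ≤ a :=
  Filter.limsup_le_of_le (by isBoundedDefault) h

lemma P_liminf {u : ℕ → EReal} {ub : EReal}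
    (h : ∀ c : ℝ, (c : EReal) < ub → ∀ᶠ k in atTop, (c : EReal) < u k) :
    erealToENN ub ≤ liminf (fun k => erealToENN (u k)) atTop := by
  induction ub using EReal.rec with
  | bot => simp
  | top =>
    rw [e_top, top_le_iff]
    refine ENNReal.eq_top_of_forall_nnreal_le fun r => ?_
    refine le_liminf_ennreal ?_
    filter_upwards [h r (by exact_mod_cast lt_top_iff_ne_top.2 (EReal.coe_ne_top r))] with k hk
    calc (r : ℝ≥0∞) = erealToENN ((r : ℝ) : EReal) := by
          rw [e_coe, ENNReal.ofReal_coe_nnreal]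
      _ ≤ erealToENN (u k) := e_mono hk.le
  | coe r =>
    rw [e_coe]
    refine ENNReal.le_of_forall_pos_le_add fun ε hε _ => ?_
    have h1 : ((r - ε : ℝ) : EReal) < (r : EReal) := by
      exact_mod_cast sub_lt_self r (by exact_mod_cast hε)
    have h2 : ENNReal.ofReal (r - ε) ≤ liminf (fun k => erealToENN (u k)) atTop := by
      refine le_liminf_ennreal ?_
      filter_upwards [h (r - ε) h1] with k hk
      calc ENNReal.ofReal (r - ε) = erealToENN ((r - ε : ℝ) : EReal) := (e_coe _).symm
        _ ≤ erealToENN (u k) := e_mono hk.le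
    calc ENNReal.ofReal r ≤ ENNReal.ofReal (r - ε) + ENNReal.ofReal ε := by
          calc ENNReal.ofReal r = ENNReal.ofReal ((r - ε) + ε) := by ring_nf
            _ ≤ _ := ENNReal.ofReal_add_le
      _ ≤ _ + ε := by
          gcongr
          rw [ENNReal.ofReal_coe_nnreal]

lemma N_limsup {u : ℕ → EReal} {ub : EReal}
    (h : ∀ c : ℝ, (c : EReal) < ub → ∀ᶠ k in atTop, (c : EReal) < u k) :
    limsup (fun k => erealToENN (-(u k))) atTop ≤ erealToENN (-ub) := by
  induction ub using EReal.rec with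
  | bot => simp
  | top =>
    have h0 : ∀ᶠ k in atTop, (0 : EReal) < u k := by
      simpa using h 0 (by simp)
    have hls : limsup (fun k => erealToENN (-(u k))) atTop ≤ ENNReal.ofReal 0 := by
      refine limsup_le_ennreal ?_
      filter_upwards [h0] with k hk
      rw [← e_coe]
      exact e_mono (by simpa using (EReal.neg_lt_neg_iff.2 hk).le)
    simpa using hls
  | coe r =>
    have hrw : -((r : ℝ) : EReal) = ((-r : ℝ) : EReal) := by norm_cast
    rw [hrw, e_coe]
    refine ENNReal.le_of_forall_pos_le_add fun ε hε _ => ?_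
    have h1 : ((r - ε : ℝ) : EReal) < (r : EReal) := by
      exact_mod_cast sub_lt_self r (by exact_mod_cast hε)
    have hls : limsup (fun k => erealToENN (-(u k))) atTop ≤ ENNReal.ofReal (-(r - ε)) := by
      refine limsup_le_ennreal ?_
      filter_upwards [h (r - ε) h1] with k hk
      have : -(u k) ≤ ((-(r - ε) : ℝ) : EReal) := by
        rw [show ((-(r - ε) : ℝ) : EReal) = -((r - ε : ℝ) : EReal) by norm_cast]
        exact (EReal.neg_lt_neg_iff.2 hk).le
      calc erealToENN (-(u k)) ≤ erealToENN ((-(r - ε) : ℝ) : EReal) := e_mono this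
        _ = ENNReal.ofReal (-(r - ε)) := e_coe _
    refine le_trans hls ?_
    calc ENNReal.ofReal (-(r - ε)) = ENNReal.ofReal (-r + ε) := by ring_nf
      _ ≤ ENNReal.ofReal (-r) + ENNReal.ofReal ε := ENNReal.ofReal_add_le
      _ ≤ _ + ε := by gcongr; rw [ENNReal.ofReal_coe_nnreal]

lemma ofReal_max (t : ℝ) : ENNReal.ofReal (max t 0) = ENNReal.ofReal t := by
  rcases le_total t 0 with h | h
  · rw [max_eq_right h, ENNReal.ofReal_zero, eq_comm, ENNReal.ofReal_eq_zero]; exact h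
  · rw [max_eq_left h]

lemma max_sub (t : ℝ) : max t 0 - max (-t) 0 = t := by
  rcases le_total t 0 with h | h
  · rw [max_eq_right h, max_eq_left (neg_nonneg.2 h)]; ring
  · rw [max_eq_left h, max_eq_right (neg_nonpos.2 h)]; ring

lemma ofReal_tri {z a b : ℝ} (h : z ≤ a + b) :
    ENNReal.ofReal z + ENNReal.ofReal (-a) + ENNReal.ofReal (-b) ≤
      ENNReal.ofReal a + ENNReal.ofReal b + ENNReal.ofReal (-z) := by
  rw [← ofReal_max z, ← ofReal_max (-a), ← ofReal_max (-b), ← ofReal_max a, ← ofReal_max b,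
    ← ofReal_max (-z), ← ENNReal.ofReal_add (le_max_right _ _) (le_max_right _ _),
    ← ENNReal.ofReal_add (add_nonneg (le_max_right _ _) (le_max_right _ _)) (le_max_right _ _),
    ← ENNReal.ofReal_add (le_max_right _ _) (le_max_right _ _),
    ← ENNReal.ofReal_add (add_nonneg (le_max_right _ _) (le_max_right _ _)) (le_max_right _ _)]
  refine ENNReal.ofReal_le_ofReal ?_
  have h1 := max_sub z; have h2 := max_sub a; have h3 := max_sub b
  linarith

lemma pt_convex {u v w : EReal} (hu : u ≠ ⊥) (hv : v ≠ ⊥) (hw : w ≠ ⊥)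
    {a b : ℝ} (ha : 0 < a) (hb : 0 < b) (h : w ≤ (a : EReal) * u + (b : EReal) * v) :
    erealToENN w + ENNReal.ofReal a * erealToENN (-u) + ENNReal.ofReal b * erealToENN (-v) ≤
      ENNReal.ofReal a * erealToENN u + ENNReal.ofReal b * erealToENN v + erealToENN (-w) := by
  rcases eq_or_ne u ⊤ with rfl | hu'
  · have : ENNReal.ofReal a * erealToENN (⊤ : EReal) = ⊤ := by
      rw [e_top, ENNReal.mul_top (by simp [ENNReal.ofReal_eq_zero]; linarith)]
    rw [this]; simp
  rcases eq_or_ne v ⊤ with rfl | hv'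
  · have : ENNReal.ofReal b * erealToENN (⊤ : EReal) = ⊤ := by
      rw [e_top, ENNReal.mul_top (by simp [ENNReal.ofReal_eq_zero]; linarith)]
    rw [this]; simp
  lift u to ℝ using ⟨hu', hu⟩
  lift v to ℝ using ⟨hv', hv⟩
  have hw' : w ≠ ⊤ := by
    intro hwt
    rw [hwt, ← EReal.coe_mul, ← EReal.coe_mul, ← EReal.coe_add, top_le_iff] at h
    exact EReal.coe_ne_top _ h
  lift w to ℝ using ⟨hw', hw⟩
  rw [← EReal.coe_mul, ← EReal.coe_mul, ← EReal.coe_add, EReal.coe_le_coe_iff] at h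
  have hnu : -(u : EReal) = ((-u : ℝ) : EReal) := by norm_cast
  have hnv : -(v : EReal) = ((-v : ℝ) : EReal) := by norm_cast
  have hnw : -(w : EReal) = ((-w : ℝ) : EReal) := by norm_cast
  rw [hnu, hnv, hnw, e_coe, e_coe, e_coe, e_coe, e_coe, e_coe,
    ← ENNReal.ofReal_mul ha.le, ← ENNReal.ofReal_mul ha.le,
    ← ENNReal.ofReal_mul hb.le, ← ENNReal.ofReal_mul hb.le]
  have h2 : a * -u = -(a * u) := by ring
  have h3 : b * -v = -(b * v) := by ring
  rw [h2, h3]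
  exact ofReal_tri h

section Meas
set_option linter.unusedSectionVars false

variable {Z' : Type*} [MeasurableSpace Z'] {E' : Type*} [NormedAddCommGroup E']
  [InnerProductSpace ℝ E']

lemma lint_le_of_support {Q : Measure Z'} [IsProbabilityMeasure Q] {s : Finset Z'}
    (hs : Q ((s : Set Z'))ᶜ = 0) {g : Z' → ℝ≥0∞} {M : ℝ≥0∞} (hbd : ∀ z ∈ s, g z ≤ M) :
    ∫⁻ z, g z ∂Q ≤ M := by
  have hae : ∀ᵐ z ∂Q, z ∈ (s : Set Z') := mem_ae_iff.mpr hs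
  calc ∫⁻ z, g z ∂Q ≤ ∫⁻ _, M ∂Q :=
        lintegral_mono_ae (by filter_upwards [hae] with z hz; exact hbd z hz)
    _ = M := by simp

lemma B_ne_top {ℓ : Z' → E' → EReal} {Q : Measure Z'} [IsProbabilityMeasure Q] {s : Finset Z'}
    (hs : Q ((s : Set Z'))ᶜ = 0) (hbot : ∀ z θ', ℓ z θ' ≠ ⊥) (θ : E') :
    ∫⁻ z, erealToENN (-(ℓ z θ)) ∂Q ≠ ⊤ := by
  have hsup : s.sup (fun z => erealToENN (-(ℓ z θ))) < ⊤ := by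
    refine (Finset.sup_lt_iff (by simp)).2 fun z hz => ?_
    exact lt_top_iff_ne_top.2 (e_ne_top (fun h => hbot z θ (EReal.neg_eq_top_iff.1 h)))
  exact ne_top_of_le_ne_top hsup.ne
    (lint_le_of_support hs fun z hz => Finset.le_sup (f := fun z => erealToENN (-(ℓ z θ))) hz)

lemma A_ne_top {ℓ : Z' → E' → EReal} {Q : Measure Z'} [IsProbabilityMeasure Q] {s : Finset Z'}
    (hs : Q ((s : Set Z'))ᶜ = 0) {θ : E'} (htop : ∀ z, ℓ z θ ≠ ⊤) :
    ∫⁻ z, erealToENN (ℓ z θ) ∂Q ≠ ⊤ := by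
  have hsup : s.sup (fun z => erealToENN (ℓ z θ)) < ⊤ := by
    refine (Finset.sup_lt_iff (by simp)).2 fun z hz => ?_
    exact lt_top_iff_ne_top.2 (e_ne_top (htop z))
  exact ne_top_of_le_ne_top hsup.ne
    (lint_le_of_support hs fun z hz => Finset.le_sup (f := fun z => erealToENN (ℓ z θ)) hz)

lemma enn_coe_eq {A : ℝ≥0∞} (hA : A ≠ ⊤) : (A : EReal) = ((A.toReal : ℝ) : EReal) := by
  have h1 : (A : EReal) ≠ ⊤ := fun h => hA (EReal.coe_ennreal_eq_top_iff.1 h)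
  conv_lhs => rw [← EReal.coe_toReal h1 (EReal.coe_ennreal_ne_bot A)]
  rw [EReal.toReal_coe_ennreal]

lemma popLoss_eq (ℓ : Z' → E' → EReal) (Q : Measure Z') (θ : E') :
    popLoss ℓ Q θ = ((∫⁻ z, erealToENN (ℓ z θ) ∂Q : ℝ≥0∞) : EReal) -
      ((∫⁻ z, erealToENN (-(ℓ z θ)) ∂Q : ℝ≥0∞) : EReal) := rfl

lemma popLoss_ne_bot {ℓ : Z' → E' → EReal} {Q : Measure Z'} {θ : E'}
    (hB : ∫⁻ z, erealToENN (-(ℓ z θ)) ∂Q ≠ ⊤) : popLoss ℓ Q θ ≠ ⊥ := by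
  rw [popLoss_eq, sub_eq_add_neg, Ne, EReal.add_eq_bot_iff]
  push_neg
  refine ⟨EReal.coe_ennreal_ne_bot _, fun h => hB ?_⟩
  exact EReal.coe_ennreal_eq_top_iff.1 (EReal.neg_eq_bot_iff.1 h)

lemma popLoss_coe {ℓ : Z' → E' → EReal} {Q : Measure Z'} {θ : E'}
    (hA : ∫⁻ z, erealToENN (ℓ z θ) ∂Q ≠ ⊤) (hB : ∫⁻ z, erealToENN (-(ℓ z θ)) ∂Q ≠ ⊤) :
    popLoss ℓ Q θ =
      (((∫⁻ z, erealToENN (ℓ z θ) ∂Q).toReal - (∫⁻ z, erealToENN (-(ℓ z θ)) ∂Q).toReal : ℝ) :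
        EReal) := by
  rw [popLoss_eq, enn_coe_eq hA, enn_coe_eq hB, ← EReal.coe_sub]

lemma popLoss_eq_top {ℓ : Z' → E' → EReal} {Q : Measure Z'} {θ : E'}
    (hA : ∫⁻ z, erealToENN (ℓ z θ) ∂Q = ⊤) (hB : ∫⁻ z, erealToENN (-(ℓ z θ)) ∂Q ≠ ⊤) :
    popLoss ℓ Q θ = ⊤ := by
  rw [popLoss_eq, hA, EReal.coe_ennreal_top, sub_eq_add_neg, EReal.top_add_of_ne_bot]
  rw [Ne, EReal.neg_eq_bot_iff]
  exact fun h => hB (EReal.coe_ennreal_eq_top_iff.1 h)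

lemma A_ne_top_of_le {ℓ : Z' → E' → EReal} {Q : Measure Z'} {θ : E'}
    (hB : ∫⁻ z, erealToENN (-(ℓ z θ)) ∂Q ≠ ⊤) {c : EReal} (hc : c ≠ ⊤)
    (hle : popLoss ℓ Q θ ≤ c) : ∫⁻ z, erealToENN (ℓ z θ) ∂Q ≠ ⊤ := by
  intro hA
  rw [popLoss_eq_top hA hB] at hle
  exact hc (top_le_iff.1 hle)

end Meas

section Analysis
set_option linter.unusedSectionVars false
open Filter

variable {Z' : Type*} [MeasurableSpace Z'] {E' : Type*} [NormedAddCommGroup E']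
  [InnerProductSpace ℝ E']

lemma bounded_below {ℓz : E' → EReal} (hlsc : LowerSemicontinuous ℓz)
    (hbot : ∀ θ, ℓz θ ≠ ⊥) {K : Set E'} (hK : IsCompact K) :
    ∃ M : ℝ, ∀ θ ∈ K, -ℓz θ ≤ (M : EReal) := by
  by_contra hcon
  push_neg at hcon
  have hseq : ∀ j : ℕ, ∃ θ ∈ K, ((j : ℝ) : EReal) < -ℓz θ := fun j => hcon j
  choose y hyK hy using hseq
  obtain ⟨th, hthK, φ, hφ, hty⟩ := hK.tendsto_subseq hyK
  obtain ⟨c, hc1, hc2⟩ := EReal.exists_between_coe_real (bot_lt_iff_ne_bot.2 (hbot th))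
  have hev : ∀ᶠ j in atTop, (c : EReal) < ℓz (y (φ j)) := hty.eventually (hlsc th c hc2)
  obtain ⟨n, hn⟩ := eventually_atTop.1 hev
  obtain ⟨N, hN⟩ := exists_nat_gt (-c)
  set j := max n N with hj
  have h1 : (c : EReal) < ℓz (y (φ j)) := hn j (le_max_left _ _)
  have h2 : ℓz (y (φ j)) < ((-(φ j : ℝ) : ℝ) : EReal) := by
    have h := EReal.neg_lt_neg_iff.2 (hy (φ j))
    rw [neg_neg] at h
    rw [show ((-(φ j : ℝ) : ℝ) : EReal) = -(((φ j : ℝ) : ℝ) : EReal) from by norm_cast]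
    exact h
  have h3 : (-(φ j : ℝ) : ℝ) ≤ -(j : ℝ) := by
    have hφj : j ≤ φ j := hφ.le_apply
    exact neg_le_neg (by exact_mod_cast hφj)
  have h4 : -(j : ℝ) ≤ -(N : ℝ) := neg_le_neg (by exact_mod_cast le_max_right n N)
  have h5 : -(N : ℝ) < c := by linarith
  have : (c : EReal) < (c : EReal) := by
    calc (c : EReal) < ℓz (y (φ j)) := h1
      _ < ((-(φ j : ℝ) : ℝ) : EReal) := h2
      _ ≤ ((-(j : ℝ) : ℝ) : EReal) := by exact_mod_cast h3
      _ ≤ ((-(N : ℝ) : ℝ) : EReal) := by exact_mod_cast h4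
      _ < (c : EReal) := by exact_mod_cast h5
  exact absurd this (lt_irrefl _)

lemma s_nonempty {Q : Measure Z'} [IsProbabilityMeasure Q] {s : Finset Z'}
    (hs : Q ((s : Set Z'))ᶜ = 0) : s.Nonempty := by
  rcases s.eq_empty_or_nonempty with rfl | h
  · exfalso
    have : Q Set.univ = 0 := by simpa using hs
    simp [measure_univ] at this
  · exact h

lemma popLoss_lsc [ProperSpace E'] {ℓ : Z' → E' → EReal} {Θ' : Set E'}
    (hloss : ProperClosedConvexLoss ℓ Θ') {Q : Measure Z'} [IsProbabilityMeasure Q]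
    {s : Finset Z'} (hs : Q ((s : Set Z'))ᶜ = 0)
    {x : ℕ → E'} {xb : E'} (hx : Tendsto x atTop (nhds xb))
    {r : ℕ → ℝ} {rb : ℝ} (hr : Tendsto r atTop (nhds rb))
    (hle : ∀ᶠ k in atTop, popLoss ℓ Q (x k) ≤ ((r k : ℝ) : EReal)) :
    popLoss ℓ Q xb ≤ (rb : EReal) := by
  obtain ⟨hbot, hlsc, hconv, htop, hmeas⟩ := hloss
  set K : Set E' := Metric.closedBall xb 1 with hKdef
  have hKcpt : IsCompact K := isCompact_closedBall xb 1
  have hxbK : xb ∈ K := Metric.mem_closedBall_self zero_le_one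
  -- uniform lower bound on the losses over K for z in the support
  have hMz : ∀ z : Z', ∃ M : ℝ, ∀ θ ∈ K, -(ℓ z θ) ≤ (M : EReal) :=
    fun z => bounded_below (hlsc z) (fun θ => hbot z θ) hKcpt
  choose Mz hMzs using hMz
  have hsne : s.Nonempty := s_nonempty hs
  set M : ℝ := max (s.sup' hsne Mz) 0 with hMdef
  have hMnn : 0 ≤ M := le_max_right _ _
  have hM : ∀ z ∈ s, ∀ θ ∈ K, erealToENN (-(ℓ z θ)) ≤ ENNReal.ofReal M := by
    intro z hz θ hθ
    calc erealToENN (-(ℓ z θ)) ≤ erealToENN ((M : ℝ) : EReal) := by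
          refine e_mono (le_trans (hMzs z θ hθ) ?_)
          exact_mod_cast le_trans (Finset.le_sup' Mz hz) (le_max_left _ _)
      _ = ENNReal.ofReal M := e_coe M
  -- shift the sequence so that all points are in K and all bounds hold
  have hxK : ∀ᶠ k in atTop, x k ∈ K := hx (Metric.closedBall_mem_nhds xb one_pos)
  obtain ⟨N, hN⟩ := eventually_atTop.1 (hxK.and hle)
  set x' : ℕ → E' := fun k => x (k + N) with hx'def
  set r' : ℕ → ℝ := fun k => r (k + N) with hr'def
  have hx' : Tendsto x' atTop (nhds xb) := hx.comp (tendsto_add_atTop_nat N)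
  have hr' : Tendsto r' atTop (nhds rb) := hr.comp (tendsto_add_atTop_nat N)
  have hK' : ∀ k, x' k ∈ K := fun k => (hN (k + N) (Nat.le_add_left N k)).1
  have hle' : ∀ k, popLoss ℓ Q (x' k) ≤ ((r' k : ℝ) : EReal) :=
    fun k => (hN (k + N) (Nat.le_add_left N k)).2
  -- notation
  have hBne : ∀ θ : E', ∫⁻ z, erealToENN (-(ℓ z θ)) ∂Q ≠ ⊤ :=
    fun θ => B_ne_top hs (fun z θ' => hbot z θ') θ
  have hBbd : ∀ θ ∈ K, ∫⁻ z, erealToENN (-(ℓ z θ)) ∂Q ≤ ENNReal.ofReal M :=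
    fun θ hθ => lint_le_of_support hs (fun z hz => hM z hz θ hθ)
  have hAk_ne : ∀ k, ∫⁻ z, erealToENN (ℓ z (x' k)) ∂Q ≠ ⊤ :=
    fun k => A_ne_top_of_le (hBne _) (EReal.coe_ne_top _) (hle' k)
  have hmeasA : ∀ θ : E', Measurable fun z => erealToENN (ℓ z θ) :=
    fun θ => e_meas.comp (hmeas θ)
  have hmeasB : ∀ θ : E', Measurable fun z => erealToENN (-(ℓ z θ)) :=
    fun θ => e_meas.comp (hmeas θ).neg
  -- Fatou
  have hFatou : (∫⁻ z, erealToENN (ℓ z xb) ∂Q) ≤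
      liminf (fun k => ∫⁻ z, erealToENN (ℓ z (x' k)) ∂Q) atTop := by
    calc (∫⁻ z, erealToENN (ℓ z xb) ∂Q)
        ≤ ∫⁻ z, liminf (fun k => erealToENN (ℓ z (x' k))) atTop ∂Q := by
          refine lintegral_mono fun z => ?_
          exact P_liminf (fun c hc => hx'.eventually (hlsc z xb c hc))
      _ ≤ liminf (fun k => ∫⁻ z, erealToENN (ℓ z (x' k)) ∂Q) atTop :=
          lintegral_liminf_le (fun k => hmeasA (x' k))
  -- reverse Fatou
  have hRev : limsup (fun k => ∫⁻ z, erealToENN (-(ℓ z (x' k))) ∂Q) atTop ≤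
      ∫⁻ z, erealToENN (-(ℓ z xb)) ∂Q := by
    have hbound : ∀ k, (fun z => erealToENN (-(ℓ z (x' k)))) ≤ᵐ[Q]
        fun _ => ENNReal.ofReal M := by
      intro k
      filter_upwards [mem_ae_iff.mpr hs] with z hz
      exact hM z hz (x' k) (hK' k)
    calc limsup (fun k => ∫⁻ z, erealToENN (-(ℓ z (x' k))) ∂Q) atTop
        ≤ ∫⁻ z, limsup (fun k => erealToENN (-(ℓ z (x' k)))) atTop ∂Q := by
          refine limsup_lintegral_le _ (fun k => hmeasB (x' k)) hbound ?_
          simp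
      _ ≤ ∫⁻ z, erealToENN (-(ℓ z xb)) ∂Q := by
          refine lintegral_mono fun z => ?_
          exact N_limsup (fun c hc => hx'.eventually (hlsc z xb c hc))
  -- finiteness of the limit positive part
  have hrub : ∀ᶠ k in atTop, r' k < rb + 1 := hr'.eventually (gt_mem_nhds (lt_add_one rb))
  have hAxb : (∫⁻ z, erealToENN (ℓ z xb) ∂Q) ≠ ⊤ := by
    have hup : ∀ᶠ k in atTop,
        (∫⁻ z, erealToENN (ℓ z (x' k)) ∂Q) ≤ ENNReal.ofReal (M + (rb + 1)) := by
      filter_upwards [hrub] with k hk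
      have hco := popLoss_coe (hAk_ne k) (hBne (x' k))
      have h1 : (∫⁻ z, erealToENN (ℓ z (x' k)) ∂Q).toReal -
          (∫⁻ z, erealToENN (-(ℓ z (x' k))) ∂Q).toReal ≤ r' k := by
        have := hle' k
        rw [hco, EReal.coe_le_coe_iff] at this
        exact this
      have h2 : (∫⁻ z, erealToENN (-(ℓ z (x' k))) ∂Q).toReal ≤ M := by
        have := ENNReal.toReal_mono ENNReal.ofReal_ne_top (hBbd (x' k) (hK' k))
        rwa [ENNReal.toReal_ofReal hMnn] at this
      have h3 : (∫⁻ z, erealToENN (ℓ z (x' k)) ∂Q).toReal ≤ M + (rb + 1) := by linarith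
      calc (∫⁻ z, erealToENN (ℓ z (x' k)) ∂Q)
          = ENNReal.ofReal (∫⁻ z, erealToENN (ℓ z (x' k)) ∂Q).toReal :=
            (ENNReal.ofReal_toReal (hAk_ne k)).symm
        _ ≤ ENNReal.ofReal (M + (rb + 1)) := ENNReal.ofReal_le_ofReal h3
    have : liminf (fun k => ∫⁻ z, erealToENN (ℓ z (x' k)) ∂Q) atTop ≤
        ENNReal.ofReal (M + (rb + 1)) := by
      refine le_trans (liminf_le_limsup) (limsup_le_ennreal ?_)
      exact hup
    exact ne_top_of_le_ne_top ENNReal.ofReal_ne_top (hFatou.trans this)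
  -- final epsilon argument
  set a : ℝ := (∫⁻ z, erealToENN (ℓ z xb) ∂Q).toReal with hadef
  set b : ℝ := (∫⁻ z, erealToENN (-(ℓ z xb)) ∂Q).toReal with hbdef
  rw [popLoss_coe hAxb (hBne xb), EReal.coe_le_coe_iff]
  by_contra hcon
  push_neg at hcon
  set ε : ℝ := (a - b - rb) / 4 with hεdef
  have hε : 0 < ε := by simp only [hεdef]; linarith
  have h1 : ∀ᶠ k in atTop, ENNReal.ofReal (a - ε) ≤ ∫⁻ z, erealToENN (ℓ z (x' k)) ∂Q := by
    rcases le_or_gt (a - ε) 0 with hneg | hpos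
    · exact Eventually.of_forall fun k => by
        rw [ENNReal.ofReal_eq_zero.2 hneg]; exact zero_le
    · have hlt : ENNReal.ofReal (a - ε) < ∫⁻ z, erealToENN (ℓ z xb) ∂Q := by
        rw [← ENNReal.ofReal_toReal hAxb]
        exact (ENNReal.ofReal_lt_ofReal_iff (by linarith)).2 (by linarith)
      have := eventually_lt_of_lt_liminf (lt_of_lt_of_le hlt hFatou)
      filter_upwards [this] with k hk using hk.le
  have h2 : ∀ᶠ k in atTop,
      (∫⁻ z, erealToENN (-(ℓ z (x' k))) ∂Q) ≤
        (∫⁻ z, erealToENN (-(ℓ z xb)) ∂Q) + ENNReal.ofReal ε := by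
    have hlt : limsup (fun k => ∫⁻ z, erealToENN (-(ℓ z (x' k))) ∂Q) atTop <
        (∫⁻ z, erealToENN (-(ℓ z xb)) ∂Q) + ENNReal.ofReal ε := by
      refine lt_of_le_of_lt hRev ?_
      exact ENNReal.lt_add_right (hBne xb) (ENNReal.ofReal_pos.2 hε).ne'
    filter_upwards [eventually_lt_of_limsup_lt hlt] with k hk using hk.le
  have h3 : ∀ᶠ k in atTop, r' k < rb + ε :=
    hr'.eventually (gt_mem_nhds (by linarith : rb < rb + ε))
  obtain ⟨k, hk1, hk2, hk3⟩ := (h1.and (h2.and h3)).exists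
  have hak : a - ε ≤ (∫⁻ z, erealToENN (ℓ z (x' k)) ∂Q).toReal :=
    (ENNReal.ofReal_le_iff_le_toReal (hAk_ne k)).1 hk1
  have hbk : (∫⁻ z, erealToENN (-(ℓ z (x' k))) ∂Q).toReal ≤ b + ε := by
    have hne : (∫⁻ z, erealToENN (-(ℓ z xb)) ∂Q) + ENNReal.ofReal ε ≠ ⊤ :=
      ENNReal.add_ne_top.2 ⟨hBne xb, ENNReal.ofReal_ne_top⟩
    have := ENNReal.toReal_mono hne hk2
    rwa [ENNReal.toReal_add (hBne xb) ENNReal.ofReal_ne_top,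
      ENNReal.toReal_ofReal hε.le] at this
  have hrk : (∫⁻ z, erealToENN (ℓ z (x' k)) ∂Q).toReal -
      (∫⁻ z, erealToENN (-(ℓ z (x' k))) ∂Q).toReal ≤ r' k := by
    have := hle' k
    rw [popLoss_coe (hAk_ne k) (hBne (x' k)), EReal.coe_le_coe_iff] at this
    exact this
  have : a - b ≤ rb + 3 * ε := by linarith [hk3]
  simp only [hεdef] at this
  linarith

end Analysis

section Convexity
set_option linter.unusedSectionVars false
open Filter

variable {Z' : Type*} [MeasurableSpace Z'] {E' : Type*} [NormedAddCommGroup E']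
  [InnerProductSpace ℝ E']

lemma mul_ne_bot_of_pos {b : ℝ} (hb : 0 < b) {w : EReal} (hw : w ≠ ⊥) :
    (b : EReal) * w ≠ ⊥ := by
  induction w using EReal.rec with
  | bot => exact absurd rfl hw
  | coe t => rw [← EReal.coe_mul]; exact EReal.coe_ne_bot _
  | top => rw [EReal.coe_mul_top_of_pos hb]; simp

lemma A_ne_top_of_ne {ℓ : Z' → E' → EReal} {Q : Measure Z'} {θ : E'}
    (hB : ∫⁻ z, erealToENN (-(ℓ z θ)) ∂Q ≠ ⊤) (h : popLoss ℓ Q θ ≠ ⊤) :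
    ∫⁻ z, erealToENN (ℓ z θ) ∂Q ≠ ⊤ :=
  fun hA => h (popLoss_eq_top hA hB)

lemma popLoss_convex {ℓ : Z' → E' → EReal} {Θ' : Set E'}
    (hloss : ProperClosedConvexLoss ℓ Θ') {Q : Measure Z'} [IsProbabilityMeasure Q]
    {s : Finset Z'} (hs : Q ((s : Set Z'))ᶜ = 0) :
    ConvexFnE (popLoss ℓ Q) := by
  obtain ⟨hbot, hlsc, hconv, htop, hmeas⟩ := hloss
  intro x y a b ha hb hab
  have hBne : ∀ θ : E', ∫⁻ z, erealToENN (-(ℓ z θ)) ∂Q ≠ ⊤ :=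
    fun θ => B_ne_top hs (fun z θ' => hbot z θ') θ
  have hLbot : ∀ θ : E', popLoss ℓ Q θ ≠ ⊥ := fun θ => popLoss_ne_bot (hBne θ)
  rcases ha.eq_or_lt with rfl | ha'
  · have hb1 : b = 1 := by linarith
    subst hb1
    simp only [zero_smul, one_smul, zero_add, EReal.coe_zero, EReal.coe_one,
      EReal.zero_mul, one_mul]
    exact le_refl _
  rcases hb.eq_or_lt with rfl | hb'
  · have ha1 : a = 1 := by linarith
    subst ha1
    simp only [zero_smul, one_smul, add_zero, EReal.coe_zero, EReal.coe_one,
      EReal.zero_mul, one_mul]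
    exact le_refl _
  rcases eq_or_ne (popLoss ℓ Q x) ⊤ with hx | hxne
  · rw [hx, EReal.coe_mul_top_of_pos ha', EReal.top_add_of_ne_bot
      (mul_ne_bot_of_pos hb' (hLbot y))]
    exact le_top
  rcases eq_or_ne (popLoss ℓ Q y) ⊤ with hy | hyne
  · rw [hy, EReal.coe_mul_top_of_pos hb', EReal.add_top_of_ne_bot
      (mul_ne_bot_of_pos ha' (hLbot x))]
    exact le_top
  have hAx := A_ne_top_of_ne (hBne x) hxne
  have hAy := A_ne_top_of_ne (hBne y) hyne
  set p : E' := a • x + b • y with hpdef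
  have hmeasA : ∀ θ : E', Measurable fun z => erealToENN (ℓ z θ) :=
    fun θ => e_meas.comp (hmeas θ)
  have hmeasB : ∀ θ : E', Measurable fun z => erealToENN (-(ℓ z θ)) :=
    fun θ => e_meas.comp (hmeas θ).neg
  have hpt : ∀ z, erealToENN (ℓ z p) + ENNReal.ofReal a * erealToENN (-(ℓ z x)) +
      ENNReal.ofReal b * erealToENN (-(ℓ z y)) ≤
      ENNReal.ofReal a * erealToENN (ℓ z x) + ENNReal.ofReal b * erealToENN (ℓ z y) +
        erealToENN (-(ℓ z p)) :=
    fun z => pt_convex (hbot z x) (hbot z y) (hbot z p) ha' hb' (hconv z x y a b ha hb hab)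
  have e1 : ∫⁻ z, (erealToENN (ℓ z p) + ENNReal.ofReal a * erealToENN (-(ℓ z x)) +
      ENNReal.ofReal b * erealToENN (-(ℓ z y))) ∂Q =
      (∫⁻ z, erealToENN (ℓ z p) ∂Q) + ENNReal.ofReal a * (∫⁻ z, erealToENN (-(ℓ z x)) ∂Q) +
        ENNReal.ofReal b * (∫⁻ z, erealToENN (-(ℓ z y)) ∂Q) := by
    rw [lintegral_add_right _ ((hmeasB y).const_mul _),
      lintegral_add_right _ ((hmeasB x).const_mul _),
      lintegral_const_mul _ (hmeasB x), lintegral_const_mul _ (hmeasB y)]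
  have e2 : ∫⁻ z, (ENNReal.ofReal a * erealToENN (ℓ z x) +
      ENNReal.ofReal b * erealToENN (ℓ z y) + erealToENN (-(ℓ z p))) ∂Q =
      ENNReal.ofReal a * (∫⁻ z, erealToENN (ℓ z x) ∂Q) +
        ENNReal.ofReal b * (∫⁻ z, erealToENN (ℓ z y) ∂Q) +
        (∫⁻ z, erealToENN (-(ℓ z p)) ∂Q) := by
    rw [lintegral_add_right _ (hmeasB p),
      lintegral_add_right _ ((hmeasA y).const_mul _),
      lintegral_const_mul _ (hmeasA x), lintegral_const_mul _ (hmeasA y)]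
  have hmain : (∫⁻ z, erealToENN (ℓ z p) ∂Q) +
      ENNReal.ofReal a * (∫⁻ z, erealToENN (-(ℓ z x)) ∂Q) +
      ENNReal.ofReal b * (∫⁻ z, erealToENN (-(ℓ z y)) ∂Q) ≤
      ENNReal.ofReal a * (∫⁻ z, erealToENN (ℓ z x) ∂Q) +
        ENNReal.ofReal b * (∫⁻ z, erealToENN (ℓ z y) ∂Q) +
        (∫⁻ z, erealToENN (-(ℓ z p)) ∂Q) := by
    rw [← e1, ← e2]
    exact lintegral_mono hpt
  have hRHSne : ENNReal.ofReal a * (∫⁻ z, erealToENN (ℓ z x) ∂Q) +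
      ENNReal.ofReal b * (∫⁻ z, erealToENN (ℓ z y) ∂Q) +
      (∫⁻ z, erealToENN (-(ℓ z p)) ∂Q) ≠ ⊤ := by
    refine ENNReal.add_ne_top.2 ⟨ENNReal.add_ne_top.2 ⟨?_, ?_⟩, hBne p⟩
    · exact ENNReal.mul_ne_top ENNReal.ofReal_ne_top hAx
    · exact ENNReal.mul_ne_top ENNReal.ofReal_ne_top hAy
  have hAp : (∫⁻ z, erealToENN (ℓ z p) ∂Q) ≠ ⊤ := by
    intro h
    apply hRHSne
    refine top_le_iff.1 ?_
    refine le_trans (le_of_eq ?_) hmain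
    simp [h]
  -- convert to reals
  rw [popLoss_coe hAp (hBne p), popLoss_coe hAx (hBne x), popLoss_coe hAy (hBne y),
    ← EReal.coe_mul, ← EReal.coe_mul, ← EReal.coe_add, EReal.coe_le_coe_iff]
  have htR := ENNReal.toReal_mono hRHSne hmain
  rw [ENNReal.toReal_add (ENNReal.add_ne_top.2 ⟨hAp,
        ENNReal.mul_ne_top ENNReal.ofReal_ne_top (hBne x)⟩)
      (ENNReal.mul_ne_top ENNReal.ofReal_ne_top (hBne y)),
    ENNReal.toReal_add hAp (ENNReal.mul_ne_top ENNReal.ofReal_ne_top (hBne x)),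
    ENNReal.toReal_add (ENNReal.add_ne_top.2 ⟨ENNReal.mul_ne_top ENNReal.ofReal_ne_top hAx,
        ENNReal.mul_ne_top ENNReal.ofReal_ne_top hAy⟩) (hBne p),
    ENNReal.toReal_add (ENNReal.mul_ne_top ENNReal.ofReal_ne_top hAx)
      (ENNReal.mul_ne_top ENNReal.ofReal_ne_top hAy),
    ENNReal.toReal_mul, ENNReal.toReal_mul, ENNReal.toReal_mul, ENNReal.toReal_mul,
    ENNReal.toReal_ofReal ha, ENNReal.toReal_ofReal hb] at htR
  linarith

end Convexity

section MinAttain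
set_option linter.unusedSectionVars false
open Filter

variable {Z' : Type*} [MeasurableSpace Z'] {E' : Type*} [NormedAddCommGroup E']
  [InnerProductSpace ℝ E']

lemma G_ne_bot {ℓ : Z' → E' → EReal} {Q : Measure Z'} {θ : E'}
    (hB : ∫⁻ z, erealToENN (-(ℓ z θ)) ∂Q ≠ ⊤) (c : ℝ) :
    popLoss ℓ Q θ - (c : EReal) ≠ ⊥ := by
  rw [sub_eq_add_neg, Ne, EReal.add_eq_bot_iff]
  push_neg
  exact ⟨popLoss_ne_bot hB, by simp⟩

lemma eq_bot_of_le_all {x : EReal} {c : ℝ} (h : ∀ R : ℕ, x ≤ ((-(R : ℝ) + c : ℝ) : EReal)) :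
    x = ⊥ := by
  by_contra hnb
  obtain ⟨c', hc1, hc2⟩ := EReal.exists_between_coe_real (bot_lt_iff_ne_bot.2 hnb)
  obtain ⟨R, hR⟩ := exists_nat_gt (c - c')
  have h1 : (-(R : ℝ) + c : ℝ) < c' := by linarith
  have := lt_of_le_of_lt (h R) (by exact_mod_cast h1 : ((-(R : ℝ) + c : ℝ) : EReal) < (c' : EReal))
  exact absurd (this.trans hc2) (lt_irrefl _)

lemma exists_min [ProperSpace E'] {ℓ : Z' → E' → EReal} {Θ' : Set E'}
    (hloss : ProperClosedConvexLoss ℓ Θ') {Q : Measure Z'} [IsProbabilityMeasure Q]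
    {s : Finset Z'} (hs : Q ((s : Set Z'))ᶜ = 0)
    {K : Set E'} (hK : IsCompact K) (hne : K.Nonempty) (v : E') :
    ∃ θ₀ ∈ K, ∀ θ ∈ K,
      popLoss ℓ Q θ₀ - ((inner ℝ v θ₀ : ℝ) : EReal) ≤ popLoss ℓ Q θ - ((inner ℝ v θ : ℝ) : EReal) := by
  have hBne : ∀ θ : E', ∫⁻ z, erealToENN (-(ℓ z θ)) ∂Q ≠ ⊤ :=
    fun θ => B_ne_top hs (fun z θ' => hloss.1 z θ') θ
  set G : E' → EReal := fun θ => popLoss ℓ Q θ - ((inner ℝ v θ : ℝ) : EReal) with hGdef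
  have hinner : Continuous fun θ : E' => (inner ℝ v θ : ℝ) := continuous_const.inner continuous_id
  by_cases hμtop : sInf (G '' K) = ⊤
  · obtain ⟨θ₀, hθ₀⟩ := hne
    refine ⟨θ₀, hθ₀, fun θ hθ => ?_⟩
    have : G θ = ⊤ := sInf_eq_top.1 hμtop _ (Set.mem_image_of_mem G hθ)
    rw [show popLoss ℓ Q θ - ((inner ℝ v θ : ℝ) : EReal) = G θ from rfl, this]
    exact le_top
  by_cases hμbot : sInf (G '' K) = ⊥
  · exfalso
    have hex : ∀ j : ℕ, ∃ θ ∈ K, G θ < ((-(j : ℝ) : ℝ) : EReal) := by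
      intro j
      have : sInf (G '' K) < ((-(j : ℝ) : ℝ) : EReal) := by
        rw [hμbot]; exact bot_lt_iff_ne_bot.2 (EReal.coe_ne_bot _)
      obtain ⟨w, hw, hwlt⟩ := sInf_lt_iff.1 this
      obtain ⟨θ, hθ, rfl⟩ := hw
      exact ⟨θ, hθ, hwlt⟩
    choose y hyK hy using hex
    obtain ⟨θ₀, hθ₀K, φ, hφ, hty⟩ := hK.tendsto_subseq hyK
    have hcv : Tendsto (fun j => (inner ℝ v (y (φ j)) : ℝ)) atTop (nhds (inner ℝ v θ₀ : ℝ)) :=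
      (hinner.tendsto θ₀).comp hty
    have key : ∀ R : ℕ, popLoss ℓ Q θ₀ ≤ ((-(R : ℝ) + (inner ℝ v θ₀ : ℝ) : ℝ) : EReal) := by
      intro R
      have hev : ∀ᶠ j in atTop,
          popLoss ℓ Q (y (φ j)) ≤ ((-(R : ℝ) + (inner ℝ v (y (φ j)) : ℝ) : ℝ) : EReal) := by
        filter_upwards [eventually_ge_atTop R] with j hj
        have hφj : R ≤ φ j := le_trans hj hφ.le_apply
        have h1 : G (y (φ j)) ≤ ((-(R : ℝ) : ℝ) : EReal) := by
          refine le_trans (hy (φ j)).le ?_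
          exact_mod_cast neg_le_neg (by exact_mod_cast hφj : (R : ℝ) ≤ (φ j : ℝ))
        have h2 : popLoss ℓ Q (y (φ j)) = G (y (φ j)) + ((inner ℝ v (y (φ j)) : ℝ) : EReal) :=
          (EReal.sub_add_cancel).symm
        rw [h2]
        calc G (y (φ j)) + ((inner ℝ v (y (φ j)) : ℝ) : EReal)
            ≤ ((-(R : ℝ) : ℝ) : EReal) + ((inner ℝ v (y (φ j)) : ℝ) : EReal) :=
              add_le_add_left h1 _
          _ = ((-(R : ℝ) + (inner ℝ v (y (φ j)) : ℝ) : ℝ) : EReal) := by norm_cast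
      exact popLoss_lsc hloss hs hty (tendsto_const_nhds.add hcv) hev
    exact popLoss_ne_bot (hBne θ₀) (eq_bot_of_le_all key)
  · set m : ℝ := (sInf (G '' K)).toReal with hmdef
    have hm : (m : EReal) = sInf (G '' K) := EReal.coe_toReal hμtop hμbot
    have hex : ∀ j : ℕ, ∃ θ ∈ K, G θ < ((m + 1 / (j + 1) : ℝ) : EReal) := by
      intro j
      have : sInf (G '' K) < ((m + 1 / (j + 1) : ℝ) : EReal) := by
        rw [← hm]
        exact_mod_cast lt_add_of_pos_right m (by positivity)
      obtain ⟨w, hw, hwlt⟩ := sInf_lt_iff.1 this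
      obtain ⟨θ, hθ, rfl⟩ := hw
      exact ⟨θ, hθ, hwlt⟩
    choose y hyK hy using hex
    obtain ⟨θ₀, hθ₀K, φ, hφ, hty⟩ := hK.tendsto_subseq hyK
    have hcv : Tendsto (fun j => (inner ℝ v (y (φ j)) : ℝ)) atTop (nhds (inner ℝ v θ₀ : ℝ)) :=
      (hinner.tendsto θ₀).comp hty
    have hr : Tendsto (fun j : ℕ => m + 1 / (j + 1 : ℝ) + (inner ℝ v (y (φ j)) : ℝ)) atTop
        (nhds (m + (inner ℝ v θ₀ : ℝ))) := by
      have := (tendsto_const_nhds (x := m)).add tendsto_one_div_add_atTop_nhds_zero_nat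
      simpa using this.add hcv
    have hev : ∀ᶠ j in atTop, popLoss ℓ Q (y (φ j)) ≤
        ((m + 1 / (j + 1 : ℝ) + (inner ℝ v (y (φ j)) : ℝ) : ℝ) : EReal) := by
      refine Eventually.of_forall fun j => ?_
      have hφj : j ≤ φ j := hφ.le_apply
      have hfrac : 1 / (φ j + 1 : ℝ) ≤ 1 / (j + 1 : ℝ) := by
        apply one_div_le_one_div_of_le (by positivity)
        have : (j : ℝ) ≤ (φ j : ℝ) := by exact_mod_cast hφj
        linarith
      have h1 : G (y (φ j)) ≤ ((m + 1 / (j + 1 : ℝ) : ℝ) : EReal) := by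
        refine le_trans (hy (φ j)).le ?_
        exact_mod_cast (by linarith : m + 1 / (φ j + 1 : ℝ) ≤ m + 1 / (j + 1 : ℝ))
      have h2 : popLoss ℓ Q (y (φ j)) = G (y (φ j)) + ((inner ℝ v (y (φ j)) : ℝ) : EReal) :=
        (EReal.sub_add_cancel).symm
      rw [h2]
      calc G (y (φ j)) + ((inner ℝ v (y (φ j)) : ℝ) : EReal)
          ≤ ((m + 1 / (j + 1 : ℝ) : ℝ) : EReal) + ((inner ℝ v (y (φ j)) : ℝ) : EReal) :=
            add_le_add_left h1 _
        _ = ((m + 1 / (j + 1 : ℝ) + (inner ℝ v (y (φ j)) : ℝ) : ℝ) : EReal) := by norm_cast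
    have hfin := popLoss_lsc hloss hs hty hr hev
    refine ⟨θ₀, hθ₀K, fun θ hθ => ?_⟩
    have hG0 : G θ₀ ≤ (m : EReal) := by
      rw [hGdef]
      calc popLoss ℓ Q θ₀ - ((inner ℝ v θ₀ : ℝ) : EReal)
          ≤ ((m + (inner ℝ v θ₀ : ℝ) : ℝ) : EReal) - ((inner ℝ v θ₀ : ℝ) : EReal) :=
            EReal.sub_le_sub hfin (le_refl _)
        _ = (m : EReal) := by
            rw [← EReal.coe_sub]
            norm_num
    calc popLoss ℓ Q θ₀ - ((inner ℝ v θ₀ : ℝ) : EReal) = G θ₀ := rfl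
      _ ≤ (m : EReal) := hG0
      _ = sInf (G '' K) := hm
      _ ≤ G θ := sInf_le (Set.mem_image_of_mem G hθ)

end MinAttain

end S6


/-- Lemma: compact argmin sets are directable: if `Q` is finitely supported
and `θ*(Q) = argmin_{θ ∈ Θ} L_Q(θ)` is compact and nonempty, then it is directable. -/
theorem statement6 {Z : Type*} [MeasurableSpace Z] {d : ℕ}
    (Θ : Set (EuclideanSpace ℝ (Fin d))) (ℓ : Z → EuclideanSpace ℝ (Fin d) → EReal)
    (hΘclosed : IsClosed Θ) (hΘconv : Convex ℝ Θ) (hΘint : (interior Θ).Nonempty)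
    (hloss : ProperClosedConvexLoss ℓ Θ)
    (Q : Measure Z) (hQ : Q ∈ Pdisc Z)
    (hcpt : IsCompact {θ ∈ Θ | ∀ θ' ∈ Θ, popLoss ℓ Q θ ≤ popLoss ℓ Q θ'})
    (hne : ({θ ∈ Θ | ∀ θ' ∈ Θ, popLoss ℓ Q θ ≤ popLoss ℓ Q θ'} : Set (EuclideanSpace ℝ (Fin d))).Nonempty) :
    Directable ℓ Θ {θ ∈ Θ | ∀ θ' ∈ Θ, popLoss ℓ Q θ ≤ popLoss ℓ Q θ'} := by
  classical
  have hbot : ∀ z θ', ℓ z θ' ≠ ⊥ := hloss.1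
  obtain ⟨hQprob, s, hs⟩ := hQ
  haveI : IsProbabilityMeasure Q := hQprob
  set C : Set (EuclideanSpace ℝ (Fin d)) :=
    {θ ∈ Θ | ∀ θ' ∈ Θ, popLoss ℓ Q θ ≤ popLoss ℓ Q θ'} with hCdef
  intro ε hε
  obtain ⟨θstar, hθs⟩ := hne
  have hθsΘ : θstar ∈ Θ := hθs.1
  have hθsmin : ∀ θ' ∈ Θ, popLoss ℓ Q θstar ≤ popLoss ℓ Q θ' := hθs.2
  obtain ⟨θhat, hθhat⟩ := hΘint
  have hBne : ∀ θ, ∫⁻ z, erealToENN (-(ℓ z θ)) ∂Q ≠ ⊤ :=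
    fun θ => S6.B_ne_top hs hbot θ
  have hLbot : ∀ θ, popLoss ℓ Q θ ≠ ⊥ := fun θ => S6.popLoss_ne_bot (hBne θ)
  have hLhat : popLoss ℓ Q θhat ≠ ⊤ := by
    have hA := S6.A_ne_top (ℓ := ℓ) hs (fun z => hloss.2.2.2.1 z θhat hθhat)
    rw [S6.popLoss_coe hA (hBne θhat)]
    exact EReal.coe_ne_top _
  have hLs_ne_top : popLoss ℓ Q θstar ≠ ⊤ :=
    ne_top_of_le_ne_top hLhat (hθsmin θhat (interior_subset hθhat))
  set mr : ℝ := (popLoss ℓ Q θstar).toReal with hmrdef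
  have hmr : (mr : EReal) = popLoss ℓ Q θstar := EReal.coe_toReal hLs_ne_top (hLbot θstar)
  have hLconv : ConvexFnE (popLoss ℓ Q) := S6.popLoss_convex hloss hs
  -- every minimizer has value mr
  have hCval : ∀ θ ∈ C, popLoss ℓ Q θ = (mr : EReal) := by
    intro θ hθ
    refine le_antisymm ?_ ?_
    · rw [hmr]; exact hθ.2 θstar hθsΘ
    · rw [hmr]; exact hθsmin θ hθ.1
  -- C is convex
  have hCconv : Convex ℝ C := by
    intro θ₁ h₁ θ₂ h₂ a b ha hb hab
    refine ⟨hΘconv h₁.1 h₂.1 ha hb hab, fun θ' hθ' => ?_⟩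
    have h3 := hLconv θ₁ θ₂ a b ha hb hab
    rw [hCval θ₁ h₁, hCval θ₂ h₂, ← EReal.coe_mul, ← EReal.coe_mul, ← EReal.coe_add] at h3
    have h4 : a * mr + b * mr = mr := by
      have h5 : (a + b) * mr = mr := by rw [hab, one_mul]
      linarith [h5]
    rw [h4] at h3
    exact le_trans h3 (by rw [hmr]; exact hθsmin θ' hθ')
  -- the fattened set
  set Cε : Set (EuclideanSpace ℝ (Fin d)) := (C + Metric.closedBall 0 ε) ∩ Θ with hCεdef
  have hCsub : C ⊆ Cε := by
    intro θ hθ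
    refine ⟨?_, hθ.1⟩
    refine Set.mem_add.2 ⟨θ, hθ, 0, ?_, add_zero θ⟩
    simpa using hε.le
  have hCεΘ : Cε ⊆ Θ := Set.inter_subset_right
  have hCεcpt : IsCompact Cε :=
    (hcpt.add (isCompact_closedBall 0 ε)).inter_right hΘclosed
  have hCεconv : Convex ℝ Cε := (hCconv.add (convex_closedBall 0 ε)).inter hΘconv
  have hdist : ∀ θ ∈ Cε, Metric.infDist θ C ≤ ε := by
    rintro θ ⟨hθ1, -⟩
    obtain ⟨c, hc, w, hw, rfl⟩ := Set.mem_add.1 hθ1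
    calc Metric.infDist (c + w) C ≤ dist (c + w) c := Metric.infDist_le_dist_of_mem hc
      _ = ‖w‖ := by rw [dist_eq_norm]; congr 1; abel
      _ ≤ ε := by simpa using Metric.mem_closedBall.1 hw
  have hCεne : Cε.Nonempty := ⟨θstar, hCsub hθs⟩
  have hθsCε : θstar ∈ Cε := hCsub hθs
  -- membership of fattened points
  have hmem_fat : ∀ θ : EuclideanSpace ℝ (Fin d), θ ∈ Θ → Metric.infDist θ C ≤ ε → θ ∈ Cε := by
    intro θ hθΘ hle
    obtain ⟨c, hc, hceq⟩ := hcpt.exists_infDist_eq_dist ⟨θstar, hθs⟩ θ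
    refine ⟨Set.mem_add.2 ⟨c, hc, θ - c, ?_, by abel⟩, hθΘ⟩
    rw [Metric.mem_closedBall, dist_zero_right, ← dist_eq_norm]
    rw [hceq] at hle
    exact hle
  -- enumerate the support
  set zs : Fin s.card → Z := fun i => ((s.equivFin.symm i : Z)) with hzsdef
  have hrange : Set.range zs = (s : Set Z) := by
    ext z
    constructor
    · rintro ⟨i, rfl⟩; exact (s.equivFin.symm i).2
    · intro hz; exact ⟨s.equivFin ⟨z, hz⟩, by simp [hzsdef]⟩
  have hQmem : Q ∈ {Q' : Measure Z | IsProbabilityMeasure Q' ∧ Q' (Set.range zs)ᶜ = 0} :=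
    ⟨hQprob, by rw [hrange]; exact hs⟩
  refine ⟨Cε, hCsub, hCεΘ, hCεcpt, hCεconv, hdist, s.card, zs, ?_⟩
  by_contra hcon
  have hcon' : ∀ δ : ℝ, 0 < δ → ¬(Metric.closedBall (0 : EuclideanSpace ℝ (Fin d)) δ ⊆
      ⋃ Q' ∈ {Q' : Measure Z | IsProbabilityMeasure Q' ∧ Q' (Set.range zs)ᶜ = 0},
        ⋃ θ ∈ Cε, subdiffE (fun θ' => popLoss ℓ Q' θ' + indE Θ θ') θ) :=
    fun δ hδ hsub => hcon ⟨δ, hδ, hsub⟩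
  -- extract a sequence of bad directions
  have hv : ∀ n : ℕ, ∃ v : EuclideanSpace ℝ (Fin d), ‖v‖ ≤ 1 / (n + 1) ∧
      ∀ θ ∈ Cε, v ∉ subdiffE (fun θ' => popLoss ℓ Q θ' + indE Θ θ') θ := by
    intro n
    obtain ⟨v, hvb, hvn⟩ := Set.not_subset.1 (hcon' (1 / (n + 1)) (by positivity))
    refine ⟨v, by simpa [dist_zero_right] using Metric.mem_closedBall.1 hvb, ?_⟩
    intro θ hθ hmem
    exact hvn (Set.mem_biUnion hQmem (Set.mem_biUnion hθ hmem))
  choose v hvn hvnot using hv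
  -- minimizers of the tilted losses over Cε
  have hmins := fun n => S6.exists_min hloss hs hCεcpt hCεne (v n)
  choose θn hθnK hθnmin using hmins
  -- Claim: the minimizers stay at distance ≥ ε from C
  have hclaim : ∀ n, ε ≤ Metric.infDist (θn n) C := by
    intro n
    by_contra hlt
    push_neg at hlt
    refine hvnot n (θn n) (hθnK n) ?_
    -- show v n is a subgradient at θn n
    have hθΘ : θn n ∈ Θ := hCεΘ (hθnK n)
    have hminθs := hθnmin n θstar hθsCε
    have hLθ_top : popLoss ℓ Q (θn n) ≠ ⊤ := by
      intro htop
      rw [htop, EReal.top_sub_coe, ← hmr, ← EReal.coe_sub, top_le_iff] at hminθs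
      exact EReal.coe_ne_top _ hminθs
    set lθ : ℝ := (popLoss ℓ Q (θn n)).toReal with hlθdef
    have hlθ : (lθ : EReal) = popLoss ℓ Q (θn n) :=
      EReal.coe_toReal hLθ_top (hLbot (θn n))
    intro θ'
    simp only [indE, if_pos hθΘ, add_zero]
    by_cases hθ'Θ : θ' ∈ Θ
    swap
    · rw [if_neg hθ'Θ, EReal.add_top_of_ne_bot (hLbot θ')]
      exact le_top
    rw [if_pos hθ'Θ, add_zero]
    by_cases hLθ'top : popLoss ℓ Q θ' = ⊤
    · rw [hLθ'top]; exact le_top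
    set lθ' : ℝ := (popLoss ℓ Q θ').toReal with hlθ'def
    have hlθ' : (lθ' : EReal) = popLoss ℓ Q θ' := EReal.coe_toReal hLθ'top (hLbot θ')
    by_cases hθeq : θ' = θn n
    · subst hθeq
      simp
    have hD : 0 < ‖θ' - θn n‖ := by
      rw [norm_pos_iff]
      intro h0
      exact hθeq (by rwa [sub_eq_zero] at h0)
    set D : ℝ := ‖θ' - θn n‖ with hDdef
    set t : ℝ := min 1 ((ε - Metric.infDist (θn n) C) / (2 * D)) with htdef
    have ht0 : 0 < t := lt_min one_pos (div_pos (by linarith) (by positivity))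
    have ht1 : t ≤ 1 := min_le_left _ _
    set θt : EuclideanSpace ℝ (Fin d) := θn n + t • (θ' - θn n) with hθtdef
    have hcomb : (1 - t) • (θn n) + t • θ' = θt := by
      rw [hθtdef, sub_smul, one_smul, smul_sub]; abel
    have hθtΘ : θt ∈ Θ := by
      rw [← hcomb]
      exact hΘconv hθΘ hθ'Θ (by linarith) ht0.le (by ring)
    have hdistt : dist θt (θn n) = t * D := by
      rw [hθtdef, dist_eq_norm]
      have : θn n + t • (θ' - θn n) - θn n = t • (θ' - θn n) := by abel
      rw [this, norm_smul, Real.norm_eq_abs, abs_of_pos ht0]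
    have hθtCε : θt ∈ Cε := by
      refine hmem_fat θt hθtΘ ?_
      have h1 : Metric.infDist θt C ≤ Metric.infDist (θn n) C + dist θt (θn n) :=
        Metric.infDist_le_infDist_add_dist
      have h2 : t * D ≤ (ε - Metric.infDist (θn n) C) / 2 := by
        have h3 : t ≤ (ε - Metric.infDist (θn n) C) / (2 * D) := min_le_right _ _
        calc t * D ≤ ((ε - Metric.infDist (θn n) C) / (2 * D)) * D :=
              mul_le_mul_of_nonneg_right h3 (norm_nonneg _)
          _ = (ε - Metric.infDist (θn n) C) / 2 := by field_simp
      have h4 : 0 ≤ Metric.infDist (θn n) C := Metric.infDist_nonneg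
      rw [hdistt] at h1
      linarith
    -- convexity bound at θt
    have hconvt : popLoss ℓ Q θt ≤ (((1 - t) * lθ + t * lθ' : ℝ) : EReal) := by
      have := hLconv (θn n) θ' (1 - t) t (by linarith) ht0.le (by ring)
      rw [hcomb, ← hlθ, ← hlθ', ← EReal.coe_mul, ← EReal.coe_mul, ← EReal.coe_add] at this
      exact this
    -- minimality at θn n
    have hmint := hθnmin n θt hθtCε
    have hinner_t : (inner ℝ (v n) θt : ℝ) =
        (inner ℝ (v n) (θn n) : ℝ) + t * (inner ℝ (v n) (θ' - θn n) : ℝ) := by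
      rw [hθtdef, inner_add_right, real_inner_smul_right]
    have hreal : lθ - (inner ℝ (v n) (θn n) : ℝ) ≤
        (1 - t) * lθ + t * lθ' - (inner ℝ (v n) θt : ℝ) := by
      have h5 : ((lθ - (inner ℝ (v n) (θn n) : ℝ) : ℝ) : EReal) ≤
          (((1 - t) * lθ + t * lθ' - (inner ℝ (v n) θt : ℝ) : ℝ) : EReal) := by
        rw [EReal.coe_sub, EReal.coe_sub, hlθ]
        exact le_trans hmint (EReal.sub_le_sub hconvt (le_refl _))
      exact EReal.coe_le_coe_iff.1 h5
    have hX : 0 ≤ lθ' - lθ - (inner ℝ (v n) (θ' - θn n) : ℝ) := by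
      rw [hinner_t] at hreal
      have h0 : t * 0 ≤ t * (lθ' - lθ - (inner ℝ (v n) (θ' - θn n) : ℝ)) := by nlinarith
      exact le_of_mul_le_mul_left (by linarith [h0]) ht0
    rw [← hlθ, ← hlθ', ← EReal.coe_add, EReal.coe_le_coe_iff]
    linarith
  -- pass to a convergent subsequence
  obtain ⟨θbar, hθbarK, φ, hφ, hconv_seq⟩ := hCεcpt.tendsto_subseq hθnK
  obtain ⟨R, hR⟩ := isBounded_iff_forall_norm_le.1 hCεcpt.isBounded
  have hvlim : ∀ k : ℕ, ‖v (φ k)‖ ≤ 1 / (k + 1) := by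
    intro k
    refine le_trans (hvn (φ k)) ?_
    apply one_div_le_one_div_of_le (by positivity)
    have : (k : ℝ) ≤ (φ k : ℝ) := by exact_mod_cast hφ.le_apply
    linarith
  set g : ℕ → ℝ := fun k => (inner ℝ (v (φ k)) (θn (φ k) - θstar) : ℝ) with hgdef
  have hgb : ∀ k, |g k| ≤ (1 / (k + 1)) * (R + ‖θstar‖) := by
    intro k
    calc |g k| ≤ ‖v (φ k)‖ * ‖θn (φ k) - θstar‖ := abs_real_inner_le_norm _ _
      _ ≤ (1 / (k + 1)) * (R + ‖θstar‖) := by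
          refine mul_le_mul (hvlim k) ?_ (norm_nonneg _) (by positivity)
          have h7 := hR (θn (φ k)) (hθnK (φ k))
          have h8 := norm_sub_le (θn (φ k)) θstar
          linarith
  have hgtend : Filter.Tendsto g Filter.atTop (nhds 0) := by
    have h := tendsto_one_div_add_atTop_nhds_zero_nat.mul_const (R + ‖θstar‖)
    rw [zero_mul] at h
    exact squeeze_zero_norm (fun k => by rw [Real.norm_eq_abs]; exact hgb k) h
  set r : ℕ → ℝ := fun k => mr + g k with hrdef
  have hrtend : Filter.Tendsto r Filter.atTop (nhds mr) := by
    have := (tendsto_const_nhds (x := mr) (f := Filter.atTop (α := ℕ))).add hgtend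
    simpa using this
  have hlek : ∀ k, popLoss ℓ Q (θn (φ k)) ≤ ((r k : ℝ) : EReal) := by
    intro k
    have hm := hθnmin (φ k) θstar hθsCε
    rw [← hmr, ← EReal.coe_sub] at hm
    have h6 : popLoss ℓ Q (θn (φ k)) =
        (popLoss ℓ Q (θn (φ k)) - ((inner ℝ (v (φ k)) (θn (φ k)) : ℝ) : EReal)) +
          ((inner ℝ (v (φ k)) (θn (φ k)) : ℝ) : EReal) := (EReal.sub_add_cancel).symm
    rw [h6]
    calc (popLoss ℓ Q (θn (φ k)) - ((inner ℝ (v (φ k)) (θn (φ k)) : ℝ) : EReal)) +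
          ((inner ℝ (v (φ k)) (θn (φ k)) : ℝ) : EReal)
        ≤ (((mr - (inner ℝ (v (φ k)) θstar : ℝ) : ℝ) : EReal)) +
          ((inner ℝ (v (φ k)) (θn (φ k)) : ℝ) : EReal) := add_le_add_left hm _
      _ = ((r k : ℝ) : EReal) := by
          rw [← EReal.coe_add]
          congr 1
          rw [hrdef]
          simp only [hgdef]
          rw [inner_sub_right]
          ring
  have hfinal : popLoss ℓ Q θbar ≤ (mr : EReal) :=
    S6.popLoss_lsc hloss hs hconv_seq hrtend (Filter.Eventually.of_forall hlek)
  have hmemC : θbar ∈ C := by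
    refine ⟨hCεΘ hθbarK, fun θ' hθ' => ?_⟩
    refine le_trans hfinal ?_
    rw [hmr]
    exact hθsmin θ' hθ'
  have hconv_inf : Filter.Tendsto (fun k => Metric.infDist (θn (φ k)) C) Filter.atTop
      (nhds (Metric.infDist θbar C)) :=
    ((Metric.continuous_infDist_pt C).tendsto θbar).comp hconv_seq
  have h1 : ε ≤ Metric.infDist θbar C :=
    ge_of_tendsto hconv_inf (Filter.Eventually.of_forall fun k => hclaim (φ k))
  rw [Metric.infDist_zero_of_mem hmemC] at h1
  linarith


end
end

section
/- Let P₀ and P₁ be probability measures on a common measurable space with ‖P₀ − P₁‖_TV ≤ γ. Then ‖P₀^n − P₁^n‖_TV ≤ √(1 − (1−γ)^{2n}). In particular, if P_{0,n} and P_{1,n} are sequences of probability measures with ‖P_{0,n} − P_{1,n}‖_TV ≤ a/n for some a < ∞, then limsup_{n→∞} ‖P_{0,n}^n − P_{1,n}^n‖_TV ≤ √(1 − e^{−2a}). -/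
open MeasureTheory

noncomputable section

/-- The total variation distance `‖P - Q‖_TV = sup_A |P(A) - Q(A)|` between two
probability measures. -/
def tvDist {Ω : Type*} [MeasurableSpace Ω] (P Q : Measure Ω) : ℝ :=
  sSup {x : ℝ | ∃ A : Set Ω, MeasurableSet A ∧ x = |(P A).toReal - (Q A).toReal|}

namespace TVAux

variable {Ω : Type*} [MeasurableSpace Ω]

lemma mem_bound {P Q : Measure Ω} [IsProbabilityMeasure P] [IsProbabilityMeasure Q]
    {x : ℝ} (hx : x ∈ {x : ℝ | ∃ A : Set Ω, MeasurableSet A ∧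
      x = |(P A).toReal - (Q A).toReal|}) : 0 ≤ x ∧ x ≤ 1 := by
  obtain ⟨A, _, rfl⟩ := hx
  have h1 : (P A).toReal ≤ 1 := by
    have := prob_le_one (μ := P) (s := A)
    simpa using ENNReal.toReal_mono ENNReal.one_ne_top this
  have h2 : (Q A).toReal ≤ 1 := by
    have := prob_le_one (μ := Q) (s := A)
    simpa using ENNReal.toReal_mono ENNReal.one_ne_top this
  have h3 : 0 ≤ (P A).toReal := ENNReal.toReal_nonneg
  have h4 : 0 ≤ (Q A).toReal := ENNReal.toReal_nonneg
  exact ⟨abs_nonneg _, abs_le.2 ⟨by linarith, by linarith⟩⟩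

lemma set_nonempty (P Q : Measure Ω) : (∅ : Set Ω) = ∅ → ((0:ℝ) ∈
    {x : ℝ | ∃ A : Set Ω, MeasurableSet A ∧ x = |(P A).toReal - (Q A).toReal|}) := by
  intro _
  exact ⟨∅, MeasurableSet.empty, by simp⟩

lemma bddAbove_set (P Q : Measure Ω) [IsProbabilityMeasure P] [IsProbabilityMeasure Q] :
    BddAbove {x : ℝ | ∃ A : Set Ω, MeasurableSet A ∧ x = |(P A).toReal - (Q A).toReal|} :=
  ⟨1, fun _ hx => (mem_bound hx).2⟩

lemma tvDist_nonneg (P Q : Measure Ω) [IsProbabilityMeasure P] [IsProbabilityMeasure Q] :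
    0 ≤ tvDist P Q :=
  le_csSup (bddAbove_set P Q) (set_nonempty P Q rfl)

lemma le_tvDist (P Q : Measure Ω) [IsProbabilityMeasure P] [IsProbabilityMeasure Q]
    {A : Set Ω} (hA : MeasurableSet A) :
    |(P A).toReal - (Q A).toReal| ≤ tvDist P Q :=
  le_csSup (bddAbove_set P Q) ⟨A, hA, rfl⟩

/-- Monotonicity of the finite product measure. -/
lemma pi_le_pi {ι : Type*} [Fintype ι] {α : ι → Type*} [∀ i, MeasurableSpace (α i)]
    {μ ν : ∀ i, Measure (α i)} (h : ∀ i, μ i ≤ ν i) : Measure.pi μ ≤ Measure.pi ν := by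
  rw [Measure.le_iff]
  intro s hs
  have e1 : Measure.pi μ s = OuterMeasure.pi (fun i => (μ i).toOuterMeasure) s := by
    rw [Measure.pi_def]; exact toMeasure_apply _ (Measure.pi_caratheodory μ) hs
  have e2 : Measure.pi ν s = OuterMeasure.pi (fun i => (ν i).toOuterMeasure) s := by
    rw [Measure.pi_def]; exact toMeasure_apply _ (Measure.pi_caratheodory ν) hs
  rw [e1, e2]
  have hmono : OuterMeasure.pi (fun i => (μ i).toOuterMeasure)
      ≤ OuterMeasure.pi (fun i => (ν i).toOuterMeasure) := by
    refine OuterMeasure.le_pi.2 fun t _ => ?_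
    refine (OuterMeasure.pi_pi_le _ t).trans ?_
    exact Finset.prod_le_prod (fun i _ => zero_le) (fun i _ => (h i) _)
  exact hmono _

/-- Main quantitative bound: `tvDist (P^n) (Q^n) ≤ 1 - (1-γ)^n`. -/
lemma tv_pi_le (P Q : Measure Ω) (hP : IsProbabilityMeasure P) (hQ : IsProbabilityMeasure Q)
    {γ : ℝ} (hγ1 : γ ≤ 1) (hγ : tvDist P Q ≤ γ) (n : ℕ) :
    tvDist (Measure.pi fun _ : Fin n => P) (Measure.pi fun _ : Fin n => Q)
      ≤ 1 - (1 - γ) ^ n := by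
  obtain ⟨s, hs, h1, h2⟩ := hahn_decomposition (μ := P) (ν := Q)
  set lam : Measure Ω := Q.restrict s + P.restrict sᶜ with hlam
  have hlamapp : ∀ t : Set Ω, MeasurableSet t → lam t = Q (t ∩ s) + P (t ∩ sᶜ) := by
    intro t ht
    simp [hlam, Measure.restrict_apply ht]
  have hlamP : lam ≤ P := by
    rw [Measure.le_iff]
    intro t ht
    rw [hlamapp t ht]
    have h1' : Q (t ∩ s) ≤ P (t ∩ s) := h1 _ (ht.inter hs) Set.inter_subset_right
    have : P (t ∩ s) + P (t ∩ sᶜ) = P t := by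
      rw [Set.inter_comm t s, Set.inter_comm t sᶜ]
      simpa [Set.inter_comm, Set.diff_eq] using measure_inter_add_diff (μ := P) t hs
    calc Q (t ∩ s) + P (t ∩ sᶜ) ≤ P (t ∩ s) + P (t ∩ sᶜ) := add_le_add_left h1' _
      _ = P t := this
  have hlamQ : lam ≤ Q := by
    rw [Measure.le_iff]
    intro t ht
    rw [hlamapp t ht]
    have h2' : P (t ∩ sᶜ) ≤ Q (t ∩ sᶜ) := h2 _ (ht.inter hs.compl) Set.inter_subset_right
    have : Q (t ∩ s) + Q (t ∩ sᶜ) = Q t := by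
      simpa [Set.diff_eq] using measure_inter_add_diff (μ := Q) t hs
    calc Q (t ∩ s) + P (t ∩ sᶜ) ≤ Q (t ∩ s) + Q (t ∩ sᶜ) := add_le_add_right h2' _
      _ = Q t := this
  have hlamfin : IsFiniteMeasure lam := by
    constructor
    exact lt_of_le_of_lt (hlamP _) (measure_lt_top P _)
  -- the total mass of lam
  have hPs : Q s ≤ P s := h1 s hs subset_rfl
  have hmass : 1 - γ ≤ (lam Set.univ).toReal := by
    have huniv : lam Set.univ = Q s + P sᶜ := by
      simpa using hlamapp Set.univ MeasurableSet.univ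
    have hQs : (Q s).toReal ≤ (P s).toReal :=
      ENNReal.toReal_mono (measure_ne_top P _) hPs
    have htv : (P s).toReal - (Q s).toReal ≤ γ := by
      refine le_trans ?_ hγ
      have := le_tvDist P Q hs
      rwa [abs_of_nonneg (by linarith)] at this
    have hPscompl : (P sᶜ).toReal = 1 - (P s).toReal := by
      rw [prob_compl_eq_one_sub hs,
        ENNReal.toReal_sub_of_le prob_le_one ENNReal.one_ne_top, ENNReal.toReal_one]
    rw [huniv, ENNReal.toReal_add (measure_ne_top Q _) (measure_ne_top P _), hPscompl]
    linarith
  have hmassnn : 0 ≤ (lam Set.univ).toReal := ENNReal.toReal_nonneg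
  -- product measures
  set Pn := Measure.pi fun _ : Fin n => P with hPn
  set Qn := Measure.pi fun _ : Fin n => Q with hQn
  set L := Measure.pi fun _ : Fin n => lam with hL
  haveI : IsProbabilityMeasure Pn := by rw [hPn]; infer_instance
  haveI : IsProbabilityMeasure Qn := by rw [hQn]; infer_instance
  haveI : SigmaFinite lam := hlamfin.toSigmaFinite
  have hLP : L ≤ Pn := pi_le_pi fun _ => hlamP
  have hLQ : L ≤ Qn := pi_le_pi fun _ => hlamQ
  have hLuniv : (L Set.univ).toReal = ((lam Set.univ).toReal) ^ n := by
    rw [hL, Measure.pi_univ]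
    rw [Finset.prod_const]
    rw [ENNReal.toReal_pow]
    simp
  -- bound each element of the sup set
  have key : ∀ x ∈ {x : ℝ | ∃ A : Set (Fin n → Ω), MeasurableSet A ∧
      x = |(Pn A).toReal - (Qn A).toReal|}, x ≤ 1 - ((lam Set.univ).toReal) ^ n := by
    rintro x ⟨A, hA, rfl⟩
    have hPA : (Pn A).toReal + (Pn Aᶜ).toReal = 1 := by
      rw [← ENNReal.toReal_add (measure_ne_top _ _) (measure_ne_top _ _),
        measure_add_measure_compl hA]
      simp
    have hQA : (Qn A).toReal + (Qn Aᶜ).toReal = 1 := by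
      rw [← ENNReal.toReal_add (measure_ne_top _ _) (measure_ne_top _ _),
        measure_add_measure_compl hA]
      simp
    have hLA : (L A).toReal + (L Aᶜ).toReal = (L Set.univ).toReal := by
      rw [← ENNReal.toReal_add, measure_add_measure_compl hA]
      · exact ne_top_of_le_ne_top (measure_ne_top Pn _) (hLP _)
      · exact ne_top_of_le_ne_top (measure_ne_top Pn _) (hLP _)
    have h5 : (L A).toReal ≤ (Qn A).toReal :=
      ENNReal.toReal_mono (measure_ne_top _ _) (hLQ _)
    have h6 : (L Aᶜ).toReal ≤ (Pn Aᶜ).toReal :=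
      ENNReal.toReal_mono (measure_ne_top _ _) (hLP _)
    have h5' : (L A).toReal ≤ (Pn A).toReal :=
      ENNReal.toReal_mono (measure_ne_top _ _) (hLP _)
    have h6' : (L Aᶜ).toReal ≤ (Qn Aᶜ).toReal :=
      ENNReal.toReal_mono (measure_ne_top _ _) (hLQ _)
    rw [← hLuniv]
    rw [abs_le]
    constructor <;> linarith
  have h0mem : (0:ℝ) ∈ {x : ℝ | ∃ A : Set (Fin n → Ω), MeasurableSet A ∧
      x = |(Pn A).toReal - (Qn A).toReal|} := ⟨∅, MeasurableSet.empty, by simp⟩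
  have hsup : tvDist Pn Qn ≤ 1 - ((lam Set.univ).toReal) ^ n :=
    csSup_le ⟨0, h0mem⟩ key
  refine hsup.trans ?_
  have : (1 - γ) ^ n ≤ ((lam Set.univ).toReal) ^ n :=
    pow_le_pow_left₀ (by linarith) hmass n
  linarith

lemma sqrt_bound {γ : ℝ} (hγ0 : 0 ≤ γ) (hγ1 : γ ≤ 1) (n : ℕ) :
    1 - (1 - γ) ^ n ≤ Real.sqrt (1 - (1 - γ) ^ (2 * n)) := by
  set x := (1 - γ) ^ n with hx
  have hx0 : 0 ≤ x := pow_nonneg (by linarith) n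
  have hx1 : x ≤ 1 := pow_le_one₀ (by linarith) (by linarith)
  have h2n : (1 - γ) ^ (2 * n) = x ^ 2 := by
    rw [hx, ← pow_mul, mul_comm]
  rw [h2n]
  have hle : (1 - x) ^ 2 ≤ 1 - x ^ 2 := by nlinarith
  calc 1 - x = Real.sqrt ((1 - x) ^ 2) := (Real.sqrt_sq (by linarith)).symm
    _ ≤ Real.sqrt (1 - x ^ 2) := Real.sqrt_le_sqrt hle

end TVAux

/-- Lemma: total variation of product measures: if `‖P₀ - P₁‖_TV ≤ γ`
(with `γ ≤ 1`; the total variation distance never exceeds 1) then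
`‖P₀^n - P₁^n‖_TV ≤ √(1 - (1-γ)^(2n))`; consequently sequences with `TV ≤ a/n` satisfy
`limsup_n ‖P_{0,n}^n - P_{1,n}^n‖_TV ≤ √(1 - e^{-2a})`. -/
theorem statement8 {Ω : Type*} [MeasurableSpace Ω] :
    (∀ P₀ P₁ : Measure Ω, IsProbabilityMeasure P₀ → IsProbabilityMeasure P₁ →
      ∀ γ : ℝ, γ ≤ 1 → tvDist P₀ P₁ ≤ γ →
        ∀ n : ℕ, tvDist (Measure.pi fun _ : Fin n => P₀) (Measure.pi fun _ : Fin n => P₁)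
          ≤ Real.sqrt (1 - (1 - γ) ^ (2 * n))) ∧
    (∀ P₀ P₁ : ℕ → Measure Ω, (∀ k, IsProbabilityMeasure (P₀ k)) →
      (∀ k, IsProbabilityMeasure (P₁ k)) →
      ∀ a : ℝ, (∀ k : ℕ, 1 ≤ k → tvDist (P₀ k) (P₁ k) ≤ a / k) →
        Filter.limsup
            (fun k : ℕ =>
              tvDist (Measure.pi fun _ : Fin k => P₀ k) (Measure.pi fun _ : Fin k => P₁ k))
            Filter.atTop
          ≤ Real.sqrt (1 - Real.exp (-2 * a))) := by
  constructor
  · intro P₀ P₁ hP₀ hP₁ γ hγ1 hγ n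
    have hγ0 : 0 ≤ γ := le_trans (@TVAux.tvDist_nonneg _ _ P₀ P₁ hP₀ hP₁) hγ
    exact (TVAux.tv_pi_le P₀ P₁ hP₀ hP₁ hγ1 hγ n).trans (TVAux.sqrt_bound hγ0 hγ1 n)
  · intro P₀ P₁ hP₀ hP₁ a htv
    have ha : 0 ≤ a := by
      have h1 := htv 1 le_rfl
      have h0 := @TVAux.tvDist_nonneg _ _ (P₀ 1) (P₁ 1) (hP₀ 1) (hP₁ 1)
      have := le_trans h0 h1
      simpa using this
    set f := fun k : ℕ =>
      tvDist (Measure.pi fun _ : Fin k => P₀ k) (Measure.pi fun _ : Fin k => P₁ k) with hf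
    set g := fun k : ℕ => Real.sqrt (1 - (1 - a / k) ^ (2 * k)) with hg
    have hfg : ∀ᶠ k in Filter.atTop, f k ≤ g k := by
      filter_upwards [Filter.eventually_ge_atTop (max 1 ⌈a⌉₊)] with k hk
      have hk1 : 1 ≤ k := le_trans (le_max_left _ _) hk
      have hkc : ⌈a⌉₊ ≤ k := le_trans (le_max_right _ _) hk
      have hak : a ≤ (k : ℝ) := le_trans (Nat.le_ceil a) (by exact_mod_cast hkc)
      have hkpos : (0 : ℝ) < k := by exact_mod_cast hk1
      have hγ1 : a / k ≤ 1 := by rw [div_le_one hkpos]; exact hak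
      exact (TVAux.tv_pi_le _ _ (hP₀ k) (hP₁ k) hγ1 (htv k hk1) k).trans
        (TVAux.sqrt_bound (div_nonneg ha hkpos.le) hγ1 k)
    have h1 : Filter.Tendsto (fun k : ℕ => (1 + (-a) / k) ^ k) Filter.atTop
        (nhds (Real.exp (-a))) := Real.tendsto_one_add_div_pow_exp (-a)
    have h2 : Filter.Tendsto (fun k : ℕ => (1 - a / k) ^ (2 * k)) Filter.atTop
        (nhds (Real.exp (-2 * a))) := by
      have hmul := h1.mul h1
      have hexp : Real.exp (-a) * Real.exp (-a) = Real.exp (-2 * a) := by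
        rw [← Real.exp_add]; ring_nf
      rw [hexp] at hmul
      refine hmul.congr fun k => ?_
      rw [show (1 : ℝ) + -a / k = 1 - a / k by ring, ← pow_add, two_mul]
    have hgt : Filter.Tendsto g Filter.atTop
        (nhds (Real.sqrt (1 - Real.exp (-2 * a)))) :=
      (tendsto_const_nhds.sub h2).sqrt
    have hbdd : Filter.IsBoundedUnder (· ≤ ·) Filter.atTop g := hgt.isBoundedUnder_le
    have hcob : Filter.IsCoboundedUnder (· ≤ ·) Filter.atTop f :=
      Filter.isCoboundedUnder_le_of_eventually_le _
        (Filter.Eventually.of_forall fun k =>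
          @TVAux.tvDist_nonneg _ _ _ _
            (Measure.pi.instIsProbabilityMeasure (μ := fun _ : Fin k => P₀ k))
            (Measure.pi.instIsProbabilityMeasure (μ := fun _ : Fin k => P₁ k)))
    calc Filter.limsup f Filter.atTop ≤ Filter.limsup g Filter.atTop :=
          Filter.limsup_le_limsup hfg hcob hbdd
      _ = _ := hgt.limsup_eq

end
end

section
/- Let f : ℝ^d → ℝ ∪ {+∞} be proper, closed and convex, and assume S₀ := argmin f is compact and nonempty. Then for every ε > 0 there exists δ > 0 such that ⋃_{θ ∈ S₀ + εB₂} ∂f(θ) ⊇ δB₂: every vector of norm at most δ arises as a subgradient of f at some point within distance ε of the set of minimizers. -/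
open MeasureTheory Set Metric Pointwise ENNReal
open scoped Classical

noncomputable section

variable {Z : Type*} [MeasurableSpace Z] {E : Type*} [NormedAddCommGroup E] [InnerProductSpace ℝ E]

variable [MeasurableSpace E]

/-- A lower semicontinuous `EReal`-valued function attains its minimum on a
nonempty compact set. -/
private lemma lsc_exists_min {α : Type*} [TopologicalSpace α] {f : α → EReal}
    (hf : LowerSemicontinuous f) {K : Set α} (hK : IsCompact K) (hne : K.Nonempty) :
    ∃ x ∈ K, ∀ y ∈ K, f x ≤ f y := by
  by_contra h
  push_neg at h
  set μ : EReal := ⨅ y ∈ K, f y with hμ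
  have hlt : ∀ x ∈ K, μ < f x := by
    intro x hx
    rcases h x hx with ⟨y, hy, hyx⟩
    exact lt_of_le_of_lt (iInf₂_le y hy) hyx
  have hcov : K ⊆ ⋃ c : {c : EReal // μ < c}, f ⁻¹' Set.Ioi (c : EReal) := by
    intro x hx
    obtain ⟨c, hc1, hc2⟩ := exists_between (hlt x hx)
    exact Set.mem_iUnion.2 ⟨⟨c, hc1⟩, hc2⟩
  have hne' : Nonempty {c : EReal // μ < c} := by
    obtain ⟨x, hx⟩ := hne
    exact ⟨⟨f x, hlt x hx⟩⟩
  have hdir : Directed (· ⊆ ·) fun c : {c : EReal // μ < c} => f ⁻¹' Set.Ioi (c : EReal) := by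
    intro c₁ c₂
    refine ⟨⟨min c₁ c₂, lt_min c₁.2 c₂.2⟩, ?_, ?_⟩ <;>
    · intro x hx
      simp only [Set.mem_preimage, Set.mem_Ioi] at *
      exact lt_of_le_of_lt (by simp) hx
  obtain ⟨c, hc⟩ := hK.elim_directed_cover _ (fun c => hf.isOpen_preimage _) hcov hdir
  have hle : (c : EReal) ≤ μ := le_iInf₂ fun y hy => le_of_lt (hc hy)
  exact absurd (lt_of_lt_of_le c.2 hle) (lt_irrefl _)

/-- Proposition: strong solution placing: if `argmin f` is compact and
nonempty, then for every `ε > 0` there is `δ > 0` such that every vector of norm at most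
`δ` is a subgradient of `f` at some point within distance `ε` of `argmin f`. -/
theorem statement11 {d : ℕ} (f : EuclideanSpace ℝ (Fin d) → EReal)
    (hbot : ∀ θ, f θ ≠ ⊥) (hproper : ∃ θ, f θ ≠ ⊤)
    (hlsc : LowerSemicontinuous f) (hconv : ConvexFnE f)
    (hcpt : IsCompact {θ : EuclideanSpace ℝ (Fin d) | ∀ θ', f θ ≤ f θ'})
    (hne : ({θ : EuclideanSpace ℝ (Fin d) | ∀ θ', f θ ≤ f θ'}).Nonempty) :
    ∀ ε : ℝ, 0 < ε → ∃ δ : ℝ, 0 < δ ∧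
      Metric.closedBall (0 : EuclideanSpace ℝ (Fin d)) δ ⊆
        ⋃ θ ∈ ({θ : EuclideanSpace ℝ (Fin d) | ∀ θ', f θ ≤ f θ'} + Metric.closedBall (0 : EuclideanSpace ℝ (Fin d)) ε),
          subdiffE f θ := by
  classical
  set S : Set (EuclideanSpace ℝ (Fin d)) := {θ | ∀ θ', f θ ≤ f θ'} with hSdef
  intro ε hε
  obtain ⟨θ₀, hθ₀⟩ := hne
  obtain ⟨θ₁, hθ₁⟩ := hproper
  have hfθ₀top : f θ₀ ≠ ⊤ := fun h => hθ₁ (top_le_iff.1 (h ▸ hθ₀ θ₁))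
  set m : ℝ := (f θ₀).toReal with hmdef
  have hm : f θ₀ = (m : EReal) := (EReal.coe_toReal hfθ₀top (hbot θ₀)).symm
  set K : Set (EuclideanSpace ℝ (Fin d)) := S + Metric.closedBall 0 ε with hKdef
  have hKcpt : IsCompact K := hcpt.add (isCompact_closedBall 0 ε)
  have hKmem : ∀ θ s : EuclideanSpace ℝ (Fin d), s ∈ S → dist θ s ≤ ε → θ ∈ K := by
    intro θ s hs hd
    refine ⟨s, hs, θ - s, ?_, by show s + (θ - s) = θ; rw [add_comm, sub_add_cancel]⟩
    simpa [dist_eq_norm] using hd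
  have hθ₀K : θ₀ ∈ K := hKmem θ₀ θ₀ hθ₀ (by simp [hε.le])
  -- radius bound
  obtain ⟨R₀, hR₀⟩ := hKcpt.isBounded.subset_closedBall 0
  set R : ℝ := max R₀ 1 with hRdef
  have hR1 : (1 : ℝ) ≤ R := le_max_right _ _
  have hR0 : (0 : ℝ) < R := lt_of_lt_of_le one_pos hR1
  have hKR : ∀ θ ∈ K, ‖θ‖ ≤ R := by
    intro θ hθ
    have := hR₀ hθ
    simp only [Metric.mem_closedBall, dist_zero_right] at this
    exact this.trans (le_max_left _ _)
  -- the shell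
  set A : Set (EuclideanSpace ℝ (Fin d)) := K ∩ {θ | ε / 2 ≤ Metric.infDist θ S} with hAdef
  have hAcpt : IsCompact A :=
    hKcpt.inter_right (isClosed_le continuous_const (continuous_infDist_pt S))
  have hAnotS : ∀ θ ∈ A, θ ∉ S := by
    intro θ hθ hθS
    have h0 : Metric.infDist θ S = 0 := Metric.infDist_zero_of_mem hθS
    have := hθ.2
    rw [Set.mem_setOf_eq, h0] at this
    linarith
  -- the gap c
  have hc : ∃ c : ℝ, m < c ∧ ∀ θ ∈ A, (c : EReal) ≤ f θ := by
    rcases A.eq_empty_or_nonempty with hAe | hAne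
    · exact ⟨m + 1, by linarith, by simp [hAe]⟩
    · obtain ⟨θA, hθA, hθAmin⟩ := lsc_exists_min hlsc hAcpt hAne
      have hgt : (m : EReal) < f θA := by
        have hnotS : θA ∉ S := hAnotS θA hθA
        rw [hSdef, Set.mem_setOf_eq] at hnotS
        push_neg at hnotS
        obtain ⟨θ'', hθ''⟩ := hnotS
        calc (m : EReal) = f θ₀ := hm.symm
          _ ≤ f θ'' := hθ₀ θ''
          _ < f θA := hθ''
      obtain ⟨b, hb1, hb2⟩ := exists_between hgt
      have hbtop : b ≠ ⊤ := fun h => absurd (h ▸ hb2) (by simp)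
      have hbbot : b ≠ ⊥ := fun h => absurd (h ▸ hb1) (by simp)
      refine ⟨b.toReal, ?_, ?_⟩
      · have : (m : EReal) < (b.toReal : EReal) := by rwa [EReal.coe_toReal hbtop hbbot]
        exact_mod_cast this
      · intro θ hθ
        rw [EReal.coe_toReal hbtop hbbot]
        exact le_trans hb2.le (hθAmin θ hθ)
  obtain ⟨c, hcm, hcA⟩ := hc
  -- choice of δ
  refine ⟨(c - m) / (4 * R), div_pos (by linarith) (by linarith), ?_⟩
  intro v hv
  have hvδ : ‖v‖ ≤ (c - m) / (4 * R) := by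
    simpa [dist_zero_right] using (Metric.mem_closedBall.1 hv)
  set δ : ℝ := (c - m) / (4 * R) with hδdef
  have hδR : 2 * (δ * R) < c - m := by
    have h4 : δ * R = (c - m) / 4 := by
      rw [hδdef]; field_simp
    rw [h4]; linarith
  -- the perturbed function
  set g : EuclideanSpace ℝ (Fin d) → EReal :=
    fun θ => f θ + ((-(inner ℝ v θ : ℝ) : ℝ) : EReal) with hgdef
  have hglsc : LowerSemicontinuous g := by
    apply hlsc.add'
    · exact (Continuous.comp continuous_coe_real_ereal
        ((continuous_const.inner continuous_id).neg)).lowerSemicontinuous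
    · intro x
      apply EReal.continuousAt_add
      · right; exact EReal.coe_ne_bot _
      · right; exact EReal.coe_ne_top _
  obtain ⟨θs, hθsK, hθsmin⟩ := lsc_exists_min hglsc hKcpt ⟨θ₀, hθ₀K⟩
  have hδ0 : 0 ≤ δ := le_of_lt (div_pos (by linarith) (by linarith))
  have hgθ₀ : g θ₀ = ((m - inner ℝ v θ₀ : ℝ) : EReal) := by
    rw [hgdef]; simp only [hm]; norm_cast
  have hgsle : g θs ≤ ((m - inner ℝ v θ₀ : ℝ) : EReal) := hgθ₀ ▸ hθsmin θ₀ hθ₀K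
  have hfstop : f θs ≠ ⊤ := by
    intro h
    rw [hgdef] at hgsle
    simp only [h, EReal.top_add_coe] at hgsle
    exact absurd (top_le_iff.1 hgsle) (EReal.coe_ne_top _)
  set F : ℝ := (f θs).toReal with hFdef
  have hfs : f θs = (F : EReal) := (EReal.coe_toReal hfstop (hbot θs)).symm
  have hgθs : g θs = ((F - inner ℝ v θs : ℝ) : EReal) := by
    rw [hgdef]; simp only [hfs]; norm_cast
  have hFle : F - inner ℝ v θs ≤ m - inner ℝ v θ₀ := by
    rw [hgθs] at hgsle; exact_mod_cast hgsle
  have hvθ₀ : |(inner ℝ v θ₀ : ℝ)| ≤ δ * R :=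
    (abs_real_inner_le_norm v θ₀).trans
      (mul_le_mul hvδ (hKR θ₀ hθ₀K) (norm_nonneg _) hδ0)
  have hvθs : |(inner ℝ v θs : ℝ)| ≤ δ * R :=
    (abs_real_inner_le_norm v θs).trans
      (mul_le_mul hvδ (hKR θs hθsK) (norm_nonneg _) hδ0)
  have hshell : Metric.infDist θs S < ε / 2 := by
    by_contra h
    push_neg at h
    have hcF : (c : EReal) ≤ (F : EReal) := hfs ▸ hcA θs ⟨hθsK, h⟩
    have hcF' : c ≤ F := by exact_mod_cast hcF
    have h1 := abs_le.1 hvθ₀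
    have h2 := abs_le.1 hvθs
    linarith [h1.1, h1.2, h2.1, h2.2]
  obtain ⟨s0, hs0S, hs0d⟩ := (Metric.infDist_lt_iff ⟨θ₀, hθ₀⟩).1 hshell
  have hball : ∀ y, dist y θs ≤ ε / 2 → y ∈ K := by
    intro y hy
    refine hKmem y s0 hs0S ?_
    calc dist y s0 ≤ dist y θs + dist θs s0 := dist_triangle _ _ _
      _ ≤ ε := by linarith
  refine Set.mem_biUnion hθsK ?_
  simp only [subdiffE, Set.mem_setOf_eq]
  intro θ'
  by_contra hcontra
  push_neg at hcontra
  have hcontra' : f θ' < ((F + inner ℝ v (θ' - θs) : ℝ) : EReal) := by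
    rwa [hfs, ← EReal.coe_add] at hcontra
  have hftop' : f θ' ≠ ⊤ := fun h => absurd (h ▸ hcontra') (by simp)
  set F' : ℝ := (f θ').toReal with hF'def
  have hfs' : f θ' = (F' : EReal) := (EReal.coe_toReal hftop' (hbot θ')).symm
  have hF' : F' < F + inner ℝ v (θ' - θs) := by
    rw [hfs'] at hcontra'; exact_mod_cast hcontra'
  set t : ℝ := min 1 (ε / 2 / (‖θ' - θs‖ + 1)) with htdef
  have hnn : (0 : ℝ) ≤ ‖θ' - θs‖ := norm_nonneg _
  have ht0 : 0 < t := lt_min one_pos (div_pos (by linarith) (by linarith))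
  have ht1 : t ≤ 1 := min_le_left _ _
  set θt : EuclideanSpace ℝ (Fin d) := (1 - t) • θs + t • θ' with hθtdef
  have hθteq : θt = θs + t • (θ' - θs) := by
    rw [hθtdef, sub_smul, one_smul, smul_sub]; abel
  have hdist : dist θt θs ≤ ε / 2 := by
    rw [dist_eq_norm, hθteq, add_sub_cancel_left, norm_smul, Real.norm_eq_abs,
      abs_of_pos ht0]
    have h3 : t ≤ ε / 2 / (‖θ' - θs‖ + 1) := min_le_right _ _
    calc t * ‖θ' - θs‖ ≤ ε / 2 / (‖θ' - θs‖ + 1) * ‖θ' - θs‖ :=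
          mul_le_mul_of_nonneg_right h3 hnn
      _ ≤ ε / 2 := by
          rw [div_mul_eq_mul_div, div_le_iff₀ (by linarith)]
          nlinarith
  have hθtK : θt ∈ K := hball θt hdist
  have hconvineq := hconv θs θ' (1 - t) t (by linarith) ht0.le (by ring)
  have hfθt : f θt ≤ (((1 - t) * F + t * F' : ℝ) : EReal) := by
    rw [← hθtdef] at hconvineq
    rw [hfs, hfs'] at hconvineq
    refine hconvineq.trans (le_of_eq ?_)
    norm_cast
  have hinner : (inner ℝ v θt : ℝ) = inner ℝ v θs + t * inner ℝ v (θ' - θs) := by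
    rw [hθteq, inner_add_right, real_inner_smul_right]
  have hgt : g θt < g θs := by
    rw [hgθs, hgdef]
    calc f θt + ((-(inner ℝ v θt : ℝ) : ℝ) : EReal)
        ≤ (((1 - t) * F + t * F' : ℝ) : EReal) + ((-(inner ℝ v θt : ℝ) : ℝ) : EReal) :=
          add_le_add_left hfθt _
      _ = (((1 - t) * F + t * F' - inner ℝ v θt : ℝ) : EReal) := by norm_cast
      _ < ((F - inner ℝ v θs : ℝ) : EReal) := by
          apply EReal.coe_lt_coe_iff.2
          rw [hinner]
          nlinarith
  exact absurd (hθsmin θt hθtK) (not_le.2 hgt)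

end
end

section
/- Assume d = 1 with Θ = ℝ, and suppose that sup_{z∈𝒵} [ℓ_z(θ) − inf_{θ'∈Θ} ℓ_z(θ')] < ∞ for every θ ∈ int Θ. Then lim_{θ→−∞} sup_{z∈𝒵} D_+ℓ_z(θ) ≤ 0 and lim_{θ→+∞} inf_{z∈𝒵} D_−ℓ_z(θ) ≥ 0 (the limits exist by monotonicity of the one-sided derivatives of convex functions). -/
open MeasureTheory Set Metric Pointwise ENNReal
open scoped Classical

noncomputable section

variable {Z : Type*} [MeasurableSpace Z] {E : Type*} [NormedAddCommGroup E] [InnerProductSpace ℝ E]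

variable [MeasurableSpace E]

/-- Lemma: one-sided derivatives eventually have the right signs: if the
loss gaps `sup_z [ℓ_z(θ) - inf ℓ_z]` are finite at every `θ`, then
`lim_{θ → -∞} sup_z D₊ℓ_z(θ) ≤ 0` and `lim_{θ → +∞} inf_z D₋ℓ_z(θ) ≥ 0`; by monotonicity
of the one-sided derivatives these limits are the infimum resp. supremum over `θ`. -/
theorem statement17 {Z : Type*} [MeasurableSpace Z] (ℓ : Z → ℝ → ℝ)
    (hconv : ∀ z, ConvexOn ℝ Set.univ (ℓ z))
    (hgap : ∀ θ : ℝ, (⨆ z : Z, (((ℓ z θ : ℝ) : EReal) - ⨅ θ' : ℝ, ((ℓ z θ' : ℝ) : EReal))) ≠ ⊤) :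
    ((⨅ θ : ℝ, ⨆ z : Z, ⨅ t ∈ Set.Ioi (0 : ℝ),
        (((ℓ z (θ + t) - ℓ z θ) / t : ℝ) : EReal)) ≤ 0) ∧
    ((0 : EReal) ≤ ⨆ θ : ℝ, ⨅ z : Z, ⨆ t ∈ Set.Ioi (0 : ℝ),
        (((ℓ z θ - ℓ z (θ - t)) / t : ℝ) : EReal)) := by
  obtain ⟨R, hSR, -⟩ := EReal.lt_iff_exists_real_btwn.mp
    (lt_top_iff_ne_top.mpr (hgap 0))
  constructor
  · by_contra h
    push_neg at h
    obtain ⟨ε, hε0, hεlt⟩ := EReal.lt_iff_exists_real_btwn.mp h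
    have hε0' : (0:ℝ) < ε := by exact_mod_cast hε0
    set M : ℝ := max 1 ((R + 1)/ε) with hMdef
    have hM0 : (0:ℝ) < M := lt_of_lt_of_le one_pos (le_max_left _ _)
    have hA : (ε:EReal) < ⨆ z : Z, ⨅ t ∈ Set.Ioi (0:ℝ),
        (((ℓ z (-M + t) - ℓ z (-M))/t : ℝ):EReal) :=
      lt_of_lt_of_le hεlt (iInf_le _ (-M))
    obtain ⟨z, hz⟩ := lt_iSup_iff.mp hA
    have hslope : (ε:EReal) < (((ℓ z (-M + M) - ℓ z (-M))/M : ℝ):EReal) :=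
      lt_of_lt_of_le hz (iInf₂_le M (show M ∈ Set.Ioi (0:ℝ) from hM0))
    rw [neg_add_cancel] at hslope
    have hr : ε < (ℓ z 0 - ℓ z (-M))/M := by exact_mod_cast hslope
    have hr2 : ε * M < ℓ z 0 - ℓ z (-M) := (lt_div_iff₀ hM0).mp hr
    have h1 : (⨅ θ' : ℝ, ((ℓ z θ' : ℝ):EReal)) ≤ ((ℓ z (-M) :ℝ):EReal) := iInf_le _ _
    have h2 : ((ℓ z 0 - ℓ z (-M) :ℝ):EReal) ≤
        ((ℓ z 0:ℝ):EReal) - ⨅ θ' : ℝ, ((ℓ z θ':ℝ):EReal) := by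
      rw [EReal.coe_sub]; exact EReal.sub_le_sub le_rfl h1
    have h3 : ((ε*M:ℝ):EReal) ≤ ⨆ z' : Z,
        (((ℓ z' 0 : ℝ) : EReal) - ⨅ θ' : ℝ, ((ℓ z' θ' : ℝ) : EReal)) :=
      le_trans (le_of_lt (by exact_mod_cast hr2)) (le_trans h2 (le_iSup
        (fun z' : Z => ((ℓ z' 0 : ℝ) : EReal) - ⨅ θ' : ℝ, ((ℓ z' θ' : ℝ) : EReal)) z))
    have hRM : R < ε * M := by
      have : ε * ((R+1)/ε) ≤ ε * M := by
        exact mul_le_mul_of_nonneg_left (le_max_right _ _) hε0'.le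
      rw [mul_div_cancel₀ _ hε0'.ne'] at this
      linarith
    exact absurd (lt_of_le_of_lt h3 hSR) (not_lt.mpr (le_of_lt (by exact_mod_cast hRM)))
  · by_contra h
    push_neg at h
    obtain ⟨c, hXc, hc0⟩ := EReal.lt_iff_exists_real_btwn.mp h
    have hc0' : c < 0 := by exact_mod_cast hc0
    set ε : ℝ := -c with hεdef
    have hε0' : (0:ℝ) < ε := by simp [hεdef]; linarith
    set M : ℝ := max 1 ((R + 1)/ε) with hMdef
    have hM0 : (0:ℝ) < M := lt_of_lt_of_le one_pos (le_max_left _ _)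
    have hA : (⨅ z : Z, ⨆ t ∈ Set.Ioi (0:ℝ),
        (((ℓ z M - ℓ z (M - t))/t : ℝ):EReal)) < (c:EReal) :=
      lt_of_le_of_lt (le_iSup (fun θ : ℝ => ⨅ z : Z, ⨆ t ∈ Set.Ioi (0:ℝ),
        (((ℓ z θ - ℓ z (θ - t))/t : ℝ):EReal)) M) hXc
    obtain ⟨z, hz⟩ := iInf_lt_iff.mp hA
    have hslope : (((ℓ z M - ℓ z (M - M))/M : ℝ):EReal) < (c:EReal) :=
      lt_of_le_of_lt (le_iSup₂ (f := fun (t : ℝ) (_ : t ∈ Set.Ioi (0:ℝ)) =>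
        (((ℓ z M - ℓ z (M - t))/t : ℝ):EReal)) M hM0) hz
    rw [sub_self] at hslope
    have hr : (ℓ z M - ℓ z 0)/M < c := by exact_mod_cast hslope
    have hr2 : ε * M < ℓ z 0 - ℓ z M := by
      have := (div_lt_iff₀ hM0).mp hr
      have hc : c * M = -(ε * M) := by rw [hεdef]; ring
      rw [hc] at this; linarith
    have h1 : (⨅ θ' : ℝ, ((ℓ z θ' : ℝ):EReal)) ≤ ((ℓ z M :ℝ):EReal) := iInf_le _ _
    have h2 : ((ℓ z 0 - ℓ z M :ℝ):EReal) ≤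
        ((ℓ z 0:ℝ):EReal) - ⨅ θ' : ℝ, ((ℓ z θ':ℝ):EReal) := by
      rw [EReal.coe_sub]; exact EReal.sub_le_sub le_rfl h1
    have h3 : ((ε*M:ℝ):EReal) ≤ ⨆ z' : Z,
        (((ℓ z' 0 : ℝ) : EReal) - ⨅ θ' : ℝ, ((ℓ z' θ' : ℝ) : EReal)) :=
      le_trans (le_of_lt (by exact_mod_cast hr2)) (le_trans h2 (le_iSup
        (fun z' : Z => ((ℓ z' 0 : ℝ) : EReal) - ⨅ θ' : ℝ, ((ℓ z' θ' : ℝ) : EReal)) z))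
    have hRM : R < ε * M := by
      have : ε * ((R+1)/ε) ≤ ε * M := mul_le_mul_of_nonneg_left (le_max_right _ _) hε0'.le
      rw [mul_div_cancel₀ _ hε0'.ne'] at this
      linarith
    exact absurd (lt_of_le_of_lt h3 hSR) (not_lt.mpr (le_of_lt (by exact_mod_cast hRM)))

end
end

section
/- Let L : ℝ^d → ℝ ∪ {+∞} be closed convex, Θ ⊆ ℝ^d closed convex, t < ∞ and ε > 0. For S ⊆ ℝ^d write L*(S) := inf_{θ∈S} L(θ), and for v ∈ ℝ^d let H_{v,t} := {θ : ⟨v,θ⟩ ≤ t‖v‖₂}. If L*(H_{v,t} ∩ Θ) < L*(Θ) + ε for every v ∈ ℝ^d, then L*(tB₂ ∩ Θ) ≤ L*(Θ) + ε, where tB₂ is the closed Euclidean ball of radius t. -/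
open MeasureTheory Set Metric Pointwise ENNReal
open scoped Classical

noncomputable section

variable {Z : Type*} [MeasurableSpace Z] {E : Type*} [NormedAddCommGroup E] [InnerProductSpace ℝ E]

variable [MeasurableSpace E]

/-- Lemma: from halfspace near-minimizers to ball near-minimizers: if every
halfspace `H_(v,t) ∩ Θ` contains an `ε`-near-minimizer of the closed convex `L`, then so
does `tB₂ ∩ Θ`. -/
theorem statement18 {d : ℕ} (L : EuclideanSpace ℝ (Fin d) → EReal)
    (hbot : ∀ θ, L θ ≠ ⊥) (hlsc : LowerSemicontinuous L) (hconv : ConvexFnE L)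
    (Θ : Set (EuclideanSpace ℝ (Fin d))) (hΘclosed : IsClosed Θ) (hΘconv : Convex ℝ Θ)
    (t : ℝ) (ht : 0 ≤ t) (ε : ℝ) (hε : 0 < ε)
    (h : ∀ v : EuclideanSpace ℝ (Fin d), (⨅ θ ∈ halfspaceH v t ∩ Θ, L θ) < (⨅ θ ∈ Θ, L θ) + (ε : EReal)) :
    (⨅ θ ∈ Metric.closedBall (0 : EuclideanSpace ℝ (Fin d)) t ∩ Θ, L θ) ≤ (⨅ θ ∈ Θ, L θ) + (ε : EReal) := by
  set M : EReal := ⨅ θ ∈ Θ, L θ with hM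
  have hH0 : halfspaceH (0 : EuclideanSpace ℝ (Fin d)) t = Set.univ := by
    ext θ; simp [halfspaceH]
  have h0 := h 0
  rw [hH0, Set.univ_inter, ← hM] at h0
  have hMbot : M ≠ ⊥ := by
    intro hb; rw [hb] at h0; simp at h0
  have hMtop : M ≠ ⊤ := by
    intro hb; rw [hb] at h0
    rw [EReal.top_add_coe] at h0
    exact lt_irrefl _ h0
  set m : ℝ := M.toReal with hm
  have hmM : (m : EReal) = M := EReal.coe_toReal hMtop hMbot
  have hMε : M + (ε : EReal) = ((m + ε : ℝ) : EReal) := by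
    rw [← hmM, ← EReal.coe_add]
  set c : ℝ := m + ε with hc
  set C : Set (EuclideanSpace ℝ (Fin d)) := Θ ∩ (L ⁻¹' Set.Iic ((c : EReal))) with hCdef
  -- C is nonempty
  obtain ⟨θ₀, hθ₀Θ, hθ₀⟩ : ∃ θ ∈ Θ, L θ < M + (ε : EReal) := by
    by_contra hcon
    push_neg at hcon
    exact absurd (le_iInf₂ hcon : M + (ε : EReal) ≤ M) (not_le.2 h0)
  have hθ₀C : θ₀ ∈ C := ⟨hθ₀Θ, by rw [Set.mem_preimage, Set.mem_Iic, ← hMε]; exact hθ₀.le⟩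
  -- C is closed and convex
  have hCclosed : IsClosed C := hΘclosed.inter (hlsc.isClosed_preimage _)
  have hCconv : Convex ℝ C := by
    intro x hx y hy a b ha hb hab
    refine ⟨hΘconv hx.1 hy.1 ha hb hab, ?_⟩
    have h1 : L (a • x + b • y) ≤ (a : EReal) * L x + (b : EReal) * L y :=
      hconv x y a b ha hb hab
    have h2 : (a : EReal) * L x ≤ (a : EReal) * (c : EReal) :=
      mul_le_mul_of_nonneg_left hx.2 (by exact_mod_cast ha)
    have h3 : (b : EReal) * L y ≤ (b : EReal) * (c : EReal) :=
      mul_le_mul_of_nonneg_left hy.2 (by exact_mod_cast hb)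
    have h4 : (a : EReal) * (c : EReal) + (b : EReal) * (c : EReal) = (c : EReal) := by
      rw [← EReal.coe_mul, ← EReal.coe_mul, ← EReal.coe_add]
      norm_cast
      rw [← add_mul, hab, one_mul]
    calc L (a • x + b • y) ≤ (a : EReal) * L x + (b : EReal) * L y := h1
      _ ≤ (a : EReal) * (c : EReal) + (b : EReal) * (c : EReal) := add_le_add h2 h3
      _ = (c : EReal) := h4
  -- argue by contradiction
  by_contra hcon
  push_neg at hcon
  -- C is disjoint from the ball
  have hdisj : Disjoint (Metric.closedBall (0 : EuclideanSpace ℝ (Fin d)) t) C := by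
    rw [Set.disjoint_left]
    intro θ hθball hθC
    have h1 : (⨅ θ ∈ Metric.closedBall (0 : EuclideanSpace ℝ (Fin d)) t ∩ Θ, L θ) ≤ L θ :=
      iInf₂_le θ ⟨hθball, hθC.1⟩
    have h2 : M + (ε : EReal) < L θ := lt_of_lt_of_le hcon h1
    rw [hMε] at h2
    exact absurd hθC.2 (not_le.2 h2)
  -- separate
  obtain ⟨f, u, v, hfu, huv, hfv⟩ :=
    geometric_hahn_banach_compact_closed (convex_closedBall (0 : EuclideanSpace ℝ (Fin d)) t)
      (isCompact_closedBall 0 t) hCconv hCclosed hdisj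
  set w : EuclideanSpace ℝ (Fin d) := (InnerProductSpace.toDual ℝ _).symm f with hw
  have hwf : ∀ x, (inner ℝ w x : ℝ) = f x := fun x => InnerProductSpace.toDual_symm_apply
  -- there is a point of the ball where ⟨w, ·⟩ equals t‖w‖
  obtain ⟨x, hxball, hfx⟩ : ∃ x ∈ Metric.closedBall (0 : EuclideanSpace ℝ (Fin d)) t,
      (inner ℝ w x : ℝ) = t * ‖w‖ := by
    by_cases hw0 : w = 0
    · exact ⟨0, Metric.mem_closedBall_self ht, by simp [hw0]⟩
    · have hnw : (0 : ℝ) < ‖w‖ := norm_pos_iff.2 hw0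
      refine ⟨(t / ‖w‖) • w, ?_, ?_⟩
      · rw [Metric.mem_closedBall, dist_zero_right, norm_smul, Real.norm_eq_abs,
          abs_of_nonneg (div_nonneg ht hnw.le)]
        rw [div_mul_cancel₀ _ hnw.ne']
      · rw [real_inner_smul_right, real_inner_self_eq_norm_sq]
        field_simp
  -- the hypothesis at w gives a point of the halfspace in C
  obtain ⟨θ₁, hθ₁H, hθ₁⟩ : ∃ θ ∈ halfspaceH w t ∩ Θ, L θ < M + (ε : EReal) := by
    by_contra hcon2
    push_neg at hcon2
    exact absurd (le_iInf₂ hcon2 : M + (ε : EReal) ≤ _) (not_le.2 (h w))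
  have hθ₁C : θ₁ ∈ C := ⟨hθ₁H.2, by rw [Set.mem_preimage, Set.mem_Iic, ← hMε]; exact hθ₁.le⟩
  have e1 : f x < u := hfu x hxball
  have e2 : v < f θ₁ := hfv θ₁ hθ₁C
  have e3 : (inner ℝ w θ₁ : ℝ) ≤ t * ‖w‖ := hθ₁H.1
  rw [hwf] at e3
  have e4 : f x = t * ‖w‖ := by rw [← hwf]; exact hfx
  linarith

end
end
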